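/- arXiv:2210.04652 — 2 statements merged into one kernel-verified Lean document; each statement's English description precedes it below -/
import Mathlib

section
/- For the Static Black-Peg AB Game with 3 pegs and c ≥ 5 colors: if a feasible strategy contains no (1,1,1)-question, then it contains in total at most six questions that are (1,1,≥2)-questions, (1,≥2,1)-questions, or (≥2,1,1)-questions. -/
/-- The answer of a question `Q` to a secret `S`: the number of pegs where they agree. -/
def answer {p c : ℕ} (Q S : Fin p → Fin c) : ℕ :=
  (Finset.univ.filter fun i => Q i = S i).card

/-- A strategy (a list of pairwise distinct injective codes) is feasible if the list of
answers determines every injective secret uniquely. -/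
def Feasible {p c : ℕ} (qs : List (Fin p → Fin c)) : Prop :=
  qs.Nodup ∧ (∀ Q ∈ qs, Function.Injective Q) ∧
    ∀ S S' : Fin p → Fin c, Function.Injective S → Function.Injective S' →
      qs.map (fun Q => answer Q S) = qs.map (fun Q => answer Q S') → S = S'

/-- The number of questions of the strategy `qs` having color `q` on peg `i`. -/
def occ {p c : ℕ} (qs : List (Fin p → Fin c)) (i : Fin p) (q : Fin c) : ℕ :=
  qs.countP fun Q => decide (Q i = q)

lemma fin3_eq {i j k : Fin 3} (t : Fin 3) (hij : i ≠ j) (hik : i ≠ k) (hjk : j ≠ k) :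
    t = i ∨ t = j ∨ t = k := by
  have h1 := i.isLt; have h2 := j.isLt; have h3 := k.isLt; have h4 := t.isLt
  simp only [Fin.ext_iff, ne_eq] at *
  omega

lemma univ_eq {i j k : Fin 3} (hij : i ≠ j) (hik : i ≠ k) (hjk : j ≠ k) :
    (Finset.univ : Finset (Fin 3)) = {i, j, k} := by
  ext t
  simp only [Finset.mem_univ, Finset.mem_insert, Finset.mem_singleton, true_iff]
  exact fin3_eq t hij hik hjk

lemma answer_eq {c : ℕ} {i j k : Fin 3} (hij : i ≠ j) (hik : i ≠ k) (hjk : j ≠ k)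
    (Q S : Fin 3 → Fin c) :
    answer Q S = (if Q i = S i then 1 else 0) + (if Q j = S j then 1 else 0)
      + (if Q k = S k then 1 else 0) := by
  rw [answer, Finset.card_filter, univ_eq hij hik hjk]
  rw [Finset.sum_insert (by simp [hij, hik]), Finset.sum_insert (by simp [hjk]),
    Finset.sum_singleton]
  ring

lemma two_le_countP {β : Type*} [DecidableEq β] {l : List β} (hl : l.Nodup) {p : β → Bool}
    {a b : β} (ha : a ∈ l) (hb : b ∈ l) (hab : a ≠ b) (hpa : p a = true) (hpb : p b = true) :
    2 ≤ l.countP p := by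
  rw [List.countP_eq_length_filter]
  have hsub : ({a, b} : Finset β) ⊆ (l.filter p).toFinset := by
    intro x hx
    rcases Finset.mem_insert.1 hx with rfl | hx
    · exact List.mem_toFinset.2 (List.mem_filter.2 ⟨ha, hpa⟩)
    · rcases Finset.mem_singleton.1 hx with rfl
      exact List.mem_toFinset.2 (List.mem_filter.2 ⟨hb, hpb⟩)
  calc 2 = ({a, b} : Finset β).card := (Finset.card_pair hab).symm
    _ ≤ (l.filter p).toFinset.card := Finset.card_le_card hsub
    _ ≤ (l.filter p).length := List.toFinset_card_le _

lemma uniq_eq {c : ℕ} {qs : List (Fin 3 → Fin c)} (hnd : qs.Nodup) {i : Fin 3}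
    {Q P : Fin 3 → Fin c} (hQ : Q ∈ qs) (hP : P ∈ qs) (hu : occ qs i (Q i) = 1)
    (h : P i = Q i) : P = Q := by
  by_contra hne
  have h2 : 2 ≤ occ qs i (Q i) := by
    rw [occ]
    exact two_le_countP hnd hP hQ hne (by simp [h]) (by simp)
  omega

lemma uniq_ne {c : ℕ} {qs : List (Fin 3 → Fin c)} (hnd : qs.Nodup) {i : Fin 3}
    {Q P : Fin 3 → Fin c} (hQ : Q ∈ qs) (hP : P ∈ qs) (hu : occ qs i (Q i) = 1)
    (hne : P ≠ Q) : P i ≠ Q i :=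
  fun h => hne (uniq_eq hnd hQ hP hu h)

lemma exists_avoid {c : ℕ} (hc : 5 ≤ c) (a b d e : Fin c) :
    ∃ x : Fin c, x ≠ a ∧ x ≠ b ∧ x ≠ d ∧ x ≠ e := by
  by_contra h
  push_neg at h
  have hsub : (Finset.univ : Finset (Fin c)) ⊆ {a, b, d, e} := by
    intro x _
    rcases eq_or_ne x a with rfl | h1
    · simp
    rcases eq_or_ne x b with rfl | h2
    · simp
    rcases eq_or_ne x d with rfl | h3
    · simp
    have := h x h1 h2 h3
    simp [this]
  have := Finset.card_le_card hsub
  have h4 : ({a, b, d, e} : Finset (Fin c)).card ≤ 4 := by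
    apply le_trans (Finset.card_insert_le _ _)
    apply Nat.succ_le_succ
    apply le_trans (Finset.card_insert_le _ _)
    apply Nat.succ_le_succ
    exact Finset.card_insert_le _ _
  simp [Finset.card_univ] at this
  omega

lemma inj3 {c : ℕ} {i j k : Fin 3} (hij : i ≠ j) (hik : i ≠ k) (hjk : j ≠ k)
    {u v w : Fin c} (huv : u ≠ v) (huw : u ≠ w) (hvw : v ≠ w) :
    Function.Injective (fun t => if t = i then u else if t = j then v else w) := by
  intro a b hab
  rcases fin3_eq a hij hik hjk with rfl | rfl | rfl <;>
    rcases fin3_eq b hij hik hjk with rfl | rfl | rfl <;>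
    simp_all [Ne.symm hij, Ne.symm hik, Ne.symm hjk, hij, hik, hjk]

lemma ind_eq {c : ℕ} {qs : List (Fin 3 → Fin c)} (hnd : qs.Nodup) {i : Fin 3}
    {Q P : Fin 3 → Fin c} (hQ : Q ∈ qs) (hP : P ∈ qs) (hu : occ qs i (Q i) = 1) :
    (if P i = Q i then (1 : ℕ) else 0) = (if P = Q then 1 else 0) := by
  by_cases hPQ : P = Q
  · subst hPQ; simp
  · rw [if_neg (uniq_ne hnd hQ hP hu hPQ), if_neg hPQ]

lemma feasible_eq {c : ℕ} {qs : List (Fin 3 → Fin c)} (hqs : Feasible qs)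
    {S S' : Fin 3 → Fin c} (hS : Function.Injective S) (hS' : Function.Injective S')
    (h : ∀ P ∈ qs, answer P S = answer P S') : S = S' :=
  hqs.2.2 S S' hS hS' (List.map_congr_left h)

lemma pair_lemma {c : ℕ} {qs : List (Fin 3 → Fin c)} (hqs : Feasible qs) (hc : 5 ≤ c)
    {i j k : Fin 3} (hij : i ≠ j) (hik : i ≠ k) (hjk : j ≠ k)
    {Q Q' : Fin 3 → Fin c} (hQ : Q ∈ qs) (hQ' : Q' ∈ qs) (hne : Q ≠ Q')
    (hQi : occ qs i (Q i) = 1) (hQj : occ qs j (Q j) = 1)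
    (hQ'i : occ qs i (Q' i) = 1) (hQ'j : occ qs j (Q' j) = 1) :
    Q i = Q' j ∨ Q' i = Q j := by
  have hnd := hqs.1
  by_contra hcon
  push_neg at hcon
  obtain ⟨h1, h2⟩ := hcon
  obtain ⟨x, hx1, hx2, hx3, hx4⟩ := exists_avoid hc (Q i) (Q j) (Q' i) (Q' j)
  set S : Fin 3 → Fin c := fun t => if t = i then Q i else if t = j then Q' j else x with hSdef
  set S' : Fin 3 → Fin c := fun t => if t = i then Q' i else if t = j then Q j else x with hS'def
  have hSinj : Function.Injective S := inj3 hij hik hjk h1 (Ne.symm hx1) (Ne.symm hx4)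
  have hS'inj : Function.Injective S' := inj3 hij hik hjk h2 (Ne.symm hx3) (Ne.symm hx2)
  have hSi : S i = Q i := by simp [hSdef]
  have hSj : S j = Q' j := by simp [hSdef, Ne.symm hij]
  have hSk : S k = x := by simp [hSdef, Ne.symm hik, Ne.symm hjk]
  have hS'i : S' i = Q' i := by simp [hS'def]
  have hS'j : S' j = Q j := by simp [hS'def, Ne.symm hij]
  have hS'k : S' k = x := by simp [hS'def, Ne.symm hik, Ne.symm hjk]
  have heq : S = S' := by
    apply feasible_eq hqs hSinj hS'inj
    intro P hP
    rw [answer_eq hij hik hjk, answer_eq hij hik hjk, hSi, hSj, hSk, hS'i, hS'j, hS'k]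
    rw [ind_eq hnd hQ hP hQi, ind_eq hnd hQ' hP hQ'j, ind_eq hnd hQ' hP hQ'i,
      ind_eq hnd hQ hP hQj]
    ring
  have : Q i = Q' i := by rw [← hSi, ← hS'i, heq]
  exact hne (uniq_eq hnd hQ' hQ hQ'i this)

lemma triple_lemma {c : ℕ} {qs : List (Fin 3 → Fin c)} (hqs : Feasible qs)
    {i j k : Fin 3} (hij : i ≠ j) (hik : i ≠ k) (hjk : j ≠ k)
    {U V W : Fin 3 → Fin c} (hU : U ∈ qs) (hV : V ∈ qs) (hW : W ∈ qs) (hVW : V ≠ W)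
    (hUj : occ qs j (U j) = 1) (hUk : occ qs k (U k) = 1)
    (hVi : occ qs i (V i) = 1) (hVk : occ qs k (V k) = 1)
    (hWi : occ qs i (W i) = 1) (hWj : occ qs j (W j) = 1) :
    W i = U j ∨ W i = V k ∨ U j = V k ∨ V i = W j ∨ V i = U k ∨ W j = U k := by
  have hnd := hqs.1
  by_contra hcon
  push_neg at hcon
  obtain ⟨h1, h2, h3, h4, h5, h6⟩ := hcon
  set S : Fin 3 → Fin c := fun t => if t = i then W i else if t = j then U j else V k with hSdef
  set S' : Fin 3 → Fin c := fun t => if t = i then V i else if t = j then W j else U k with hS'def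
  have hSinj : Function.Injective S := inj3 hij hik hjk h1 h2 h3
  have hS'inj : Function.Injective S' := inj3 hij hik hjk h4 h5 h6
  have hSi : S i = W i := by simp [hSdef]
  have hSj : S j = U j := by simp [hSdef, Ne.symm hij]
  have hSk : S k = V k := by simp [hSdef, Ne.symm hik, Ne.symm hjk]
  have hS'i : S' i = V i := by simp [hS'def]
  have hS'j : S' j = W j := by simp [hS'def, Ne.symm hij]
  have hS'k : S' k = U k := by simp [hS'def, Ne.symm hik, Ne.symm hjk]
  have heq : S = S' := by
    apply feasible_eq hqs hSinj hS'inj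
    intro P hP
    rw [answer_eq hij hik hjk, answer_eq hij hik hjk, hSi, hSj, hSk, hS'i, hS'j, hS'k]
    rw [ind_eq hnd hW hP hWi, ind_eq hnd hU hP hUj, ind_eq hnd hV hP hVk,
      ind_eq hnd hV hP hVi, ind_eq hnd hW hP hWj, ind_eq hnd hU hP hUk]
    ring
  have : V i = W i := by rw [← hSi, ← hS'i, heq]
  exact hVW (uniq_eq hnd hW hV hWi this)

lemma ne_of_heavy {c : ℕ} {qs : List (Fin 3 → Fin c)} {t : Fin 3} {X Y : Fin 3 → Fin c}
    (h2 : 2 ≤ occ qs t (X t)) (h1 : occ qs t (Y t) = 1) : X ≠ Y := by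
  intro h
  rw [h] at h2
  omega

lemma cyc_of_three {c : ℕ} {qs : List (Fin 3 → Fin c)} (hqs : Feasible qs) (hc : 5 ≤ c)
    {a b g : Fin 3} (hab : a ≠ b) (hag : a ≠ g) (hbg : b ≠ g)
    {Q1 Q2 Q3 : Fin 3 → Fin c} (hQ1 : Q1 ∈ qs) (hQ2 : Q2 ∈ qs) (hQ3 : Q3 ∈ qs)
    (h12 : Q1 ≠ Q2) (h13 : Q1 ≠ Q3) (h23 : Q2 ≠ Q3)
    (h1a : occ qs a (Q1 a) = 1) (h1b : occ qs b (Q1 b) = 1)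
    (h2a : occ qs a (Q2 a) = 1) (h2b : occ qs b (Q2 b) = 1)
    (h3a : occ qs a (Q3 a) = 1) (h3b : occ qs b (Q3 b) = 1) :
    (Q1 a = Q2 b ∧ Q2 a = Q3 b ∧ Q3 a = Q1 b) ∨
    (Q1 a = Q3 b ∧ Q3 a = Q2 b ∧ Q2 a = Q1 b) := by
  have hnd := hqs.1
  have p12 := pair_lemma hqs hc hab hag hbg hQ1 hQ2 h12 h1a h1b h2a h2b
  have p13 := pair_lemma hqs hc hab hag hbg hQ1 hQ3 h13 h1a h1b h3a h3b
  have p23 := pair_lemma hqs hc hab hag hbg hQ2 hQ3 h23 h2a h2b h3a h3b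
  rcases p12 with e12 | e21 <;> rcases p13 with e13 | e31 <;> rcases p23 with e23 | e32
  · exact absurd (uniq_eq hnd hQ3 hQ2 h3b (e12.symm.trans e13)) h23
  · exact absurd (uniq_eq hnd hQ3 hQ2 h3b (e12.symm.trans e13)) h23
  · exact Or.inl ⟨e12, e23, e31⟩
  · exact absurd (uniq_eq hnd hQ3 hQ1 h3a (e12.trans e32.symm)) h13
  · exact absurd (uniq_eq hnd hQ3 hQ1 h3b (e21.symm.trans e23)) h13
  · exact Or.inr ⟨e13, e32, e21⟩
  · exact absurd (uniq_eq hnd hQ3 hQ2 h3a (e21.trans e31.symm)) h23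
  · exact absurd (uniq_eq hnd hQ3 hQ2 h3a (e21.trans e31.symm)) h23


lemma four_lemma {c : ℕ} {qs : List (Fin 3 → Fin c)} (hqs : Feasible qs) (hc : 5 ≤ c)
    {a b g : Fin 3} (hab : a ≠ b) (hag : a ≠ g) (hbg : b ≠ g)
    {Q1 Q2 Q3 Q4 : Fin 3 → Fin c}
    (hQ1 : Q1 ∈ qs) (hQ2 : Q2 ∈ qs) (hQ3 : Q3 ∈ qs) (hQ4 : Q4 ∈ qs)
    (h12 : Q1 ≠ Q2) (h13 : Q1 ≠ Q3) (h14 : Q1 ≠ Q4)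
    (h23 : Q2 ≠ Q3) (h24 : Q2 ≠ Q4) (h34 : Q3 ≠ Q4)
    (h1a : occ qs a (Q1 a) = 1) (h1b : occ qs b (Q1 b) = 1)
    (h2a : occ qs a (Q2 a) = 1) (h2b : occ qs b (Q2 b) = 1)
    (h3a : occ qs a (Q3 a) = 1) (h3b : occ qs b (Q3 b) = 1)
    (h4a : occ qs a (Q4 a) = 1) (h4b : occ qs b (Q4 b) = 1) : False := by
  have hnd := hqs.1
  have p12 := pair_lemma hqs hc hab hag hbg hQ1 hQ2 h12 h1a h1b h2a h2b
  have p13 := pair_lemma hqs hc hab hag hbg hQ1 hQ3 h13 h1a h1b h3a h3b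
  have p14 := pair_lemma hqs hc hab hag hbg hQ1 hQ4 h14 h1a h1b h4a h4b
  rcases p12 with e12 | e21 <;> rcases p13 with e13 | e31 <;> rcases p14 with e14 | e41
  · exact absurd (uniq_eq hnd hQ3 hQ2 h3b (e12.symm.trans e13)) h23
  · exact absurd (uniq_eq hnd hQ3 hQ2 h3b (e12.symm.trans e13)) h23
  · exact absurd (uniq_eq hnd hQ4 hQ2 h4b (e12.symm.trans e14)) h24
  · exact absurd (uniq_eq hnd hQ4 hQ3 h4a (e31.trans e41.symm)) h34
  · exact absurd (uniq_eq hnd hQ4 hQ3 h4b (e13.symm.trans e14)) h34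
  · exact absurd (uniq_eq hnd hQ4 hQ2 h4a (e21.trans e41.symm)) h24
  · exact absurd (uniq_eq hnd hQ3 hQ2 h3a (e21.trans e31.symm)) h23
  · exact absurd (uniq_eq hnd hQ3 hQ2 h3a (e21.trans e31.symm)) h23

section Core331
variable {c : ℕ} {qs : List (Fin 3 → Fin c)}

/-- Core step for the (3,3,1) case. -/
lemma core331 (hqs : Feasible qs)
    {i j k : Fin 3} (hij : i ≠ j) (hik : i ≠ k) (hjk : j ≠ k)
    {U Un Up V Vn Vp W : Fin 3 → Fin c}
    (hU : U ∈ qs) (hUn : Un ∈ qs) (hUp : Up ∈ qs)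
    (hV : V ∈ qs) (hVn : Vn ∈ qs) (hVp : Vp ∈ qs) (hW : W ∈ qs)
    (hUj : occ qs j (U j) = 1) (hUk : occ qs k (U k) = 1)
    (hUnk : occ qs k (Un k) = 1) (hUpj : occ qs j (Up j) = 1)
    (hVi : occ qs i (V i) = 1) (hVk : occ qs k (V k) = 1)
    (hVnk : occ qs k (Vn k) = 1) (hVpi : occ qs i (Vp i) = 1)
    (hWi : occ qs i (W i) = 1) (hWj : occ qs j (W j) = 1)
    (hUnH : 2 ≤ occ qs i (Un i)) (hUpH : 2 ≤ occ qs i (Up i))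
    (hVH : 2 ≤ occ qs j (V j)) (hVnH : 2 ≤ occ qs j (Vn j)) (hVpH : 2 ≤ occ qs j (Vp j))
    (hUne : U j = Un k) (hUpe : Up j = U k)
    (hVne : V i = Vn k) (hVpe : Vp i = V k)
    (hch : W i ≠ U j) :
    V i = W j := by
  have hnd := hqs.1
  have hVW : V ≠ W := ne_of_heavy hVH hWj
  rcases triple_lemma hqs hij hik hjk hU hV hW hVW hUj hUk hVi hVk hWi hWj with
    h | h | h | h | h | h
  · exact absurd h hch
  · rw [← hVpe] at h
    exact absurd (uniq_eq hnd hVp hW hVpi h) (ne_of_heavy hVpH hWj).symm.elim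
  · rw [hUne] at h
    exact absurd (uniq_eq hnd hV hUn hVk h) (ne_of_heavy hUnH hVi)
  · exact h
  · rw [hVne] at h
    exact absurd (uniq_eq hnd hU hVn hUk h) (ne_of_heavy hVnH hUj)
  · rw [← hUpe] at h
    exact absurd (uniq_eq hnd hUp hW hUpj h) (ne_of_heavy hUpH hWi).symm.elim
end Core331

section Contra331
variable {c : ℕ} {qs : List (Fin 3 → Fin c)}

lemma contra331 (hqs : Feasible qs)
    {i j k : Fin 3} (hij : i ≠ j) (hik : i ≠ k) (hjk : j ≠ k)
    {U1 U2 U3 V1 V2 V3 W : Fin 3 → Fin c}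
    (hU1 : U1 ∈ qs) (hU2 : U2 ∈ qs) (hU3 : U3 ∈ qs)
    (hV1 : V1 ∈ qs) (hV2 : V2 ∈ qs) (hV3 : V3 ∈ qs) (hW : W ∈ qs)
    (hU1j : occ qs j (U1 j) = 1) (hU1k : occ qs k (U1 k) = 1)
    (hU2j : occ qs j (U2 j) = 1) (hU2k : occ qs k (U2 k) = 1)
    (hU3j : occ qs j (U3 j) = 1) (hU3k : occ qs k (U3 k) = 1)
    (hV1i : occ qs i (V1 i) = 1) (hV1k : occ qs k (V1 k) = 1)
    (hV2i : occ qs i (V2 i) = 1) (hV2k : occ qs k (V2 k) = 1)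
    (hV3i : occ qs i (V3 i) = 1) (hV3k : occ qs k (V3 k) = 1)
    (hWi : occ qs i (W i) = 1) (hWj : occ qs j (W j) = 1)
    (hU1H : 2 ≤ occ qs i (U1 i)) (hU2H : 2 ≤ occ qs i (U2 i)) (hU3H : 2 ≤ occ qs i (U3 i))
    (hV1H : 2 ≤ occ qs j (V1 j)) (hV2H : 2 ≤ occ qs j (V2 j)) (hV3H : 2 ≤ occ qs j (V3 j))
    (hU12 : U1 ≠ U2) (hV12 : V1 ≠ V2)
    (hU12e : U1 j = U2 k) (hU23e : U2 j = U3 k) (hU31e : U3 j = U1 k)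
    (hV12e : V1 i = V2 k) (hV23e : V2 i = V3 k) (hV31e : V3 i = V1 k) : False := by
  have hnd := hqs.1
  by_cases hx : W i = U1 j
  · have hch : W i ≠ U2 j := by
      intro h
      exact hU12 (uniq_eq hnd hU2 hU1 hU2j (hx.symm.trans h))
    have e1 : V1 i = W j :=
      core331 hqs hij hik hjk hU2 hU3 hU1 hV1 hV2 hV3 hW hU2j hU2k hU3k hU1j
        hV1i hV1k hV2k hV3i hWi hWj hU3H hU1H hV1H hV2H hV3H hU23e hU12e hV12e hV31e hch
    have e2 : V2 i = W j :=
      core331 hqs hij hik hjk hU2 hU3 hU1 hV2 hV3 hV1 hW hU2j hU2k hU3k hU1j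
        hV2i hV2k hV3k hV1i hWi hWj hU3H hU1H hV2H hV3H hV1H hU23e hU12e hV23e hV12e hch
    exact hV12 (uniq_eq hnd hV2 hV1 hV2i (e1.trans e2.symm))
  · have e1 : V1 i = W j :=
      core331 hqs hij hik hjk hU1 hU2 hU3 hV1 hV2 hV3 hW hU1j hU1k hU2k hU3j
        hV1i hV1k hV2k hV3i hWi hWj hU2H hU3H hV1H hV2H hV3H hU12e hU31e hV12e hV31e hx
    have e2 : V2 i = W j :=
      core331 hqs hij hik hjk hU1 hU2 hU3 hV2 hV3 hV1 hW hU1j hU1k hU2k hU3j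
        hV2i hV2k hV3k hV1i hWi hWj hU2H hU3H hV2H hV3H hV1H hU12e hU31e hV23e hV12e hx
    exact hV12 (uniq_eq hnd hV2 hV1 hV2i (e1.trans e2.symm))

lemma L331 (hqs : Feasible qs) (hc : 5 ≤ c)
    {i j k : Fin 3} (hij : i ≠ j) (hik : i ≠ k) (hjk : j ≠ k)
    {U1 U2 U3 V1 V2 V3 W : Fin 3 → Fin c}
    (hU1 : U1 ∈ qs) (hU2 : U2 ∈ qs) (hU3 : U3 ∈ qs)
    (hV1 : V1 ∈ qs) (hV2 : V2 ∈ qs) (hV3 : V3 ∈ qs) (hW : W ∈ qs)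
    (hU1j : occ qs j (U1 j) = 1) (hU1k : occ qs k (U1 k) = 1)
    (hU2j : occ qs j (U2 j) = 1) (hU2k : occ qs k (U2 k) = 1)
    (hU3j : occ qs j (U3 j) = 1) (hU3k : occ qs k (U3 k) = 1)
    (hV1i : occ qs i (V1 i) = 1) (hV1k : occ qs k (V1 k) = 1)
    (hV2i : occ qs i (V2 i) = 1) (hV2k : occ qs k (V2 k) = 1)
    (hV3i : occ qs i (V3 i) = 1) (hV3k : occ qs k (V3 k) = 1)
    (hWi : occ qs i (W i) = 1) (hWj : occ qs j (W j) = 1)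
    (hU1H : 2 ≤ occ qs i (U1 i)) (hU2H : 2 ≤ occ qs i (U2 i)) (hU3H : 2 ≤ occ qs i (U3 i))
    (hV1H : 2 ≤ occ qs j (V1 j)) (hV2H : 2 ≤ occ qs j (V2 j)) (hV3H : 2 ≤ occ qs j (V3 j))
    (hU12 : U1 ≠ U2) (hU13 : U1 ≠ U3) (hU23 : U2 ≠ U3)
    (hV12 : V1 ≠ V2) (hV13 : V1 ≠ V3) (hV23 : V2 ≠ V3) : False := by
  have cycU := cyc_of_three hqs hc hjk hij.symm hik.symm hU1 hU2 hU3 hU12 hU13 hU23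
    hU1j hU1k hU2j hU2k hU3j hU3k
  have cycV := cyc_of_three hqs hc hik hij hjk.symm hV1 hV2 hV3 hV12 hV13 hV23
    hV1i hV1k hV2i hV2k hV3i hV3k
  rcases cycU with ⟨u1, u2, u3⟩ | ⟨u1, u2, u3⟩ <;> rcases cycV with ⟨v1, v2, v3⟩ | ⟨v1, v2, v3⟩
  · exact contra331 hqs hij hik hjk hU1 hU2 hU3 hV1 hV2 hV3 hW hU1j hU1k hU2j hU2k hU3j hU3k
      hV1i hV1k hV2i hV2k hV3i hV3k hWi hWj hU1H hU2H hU3H hV1H hV2H hV3H hU12 hV12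
      u1 u2 u3 v1 v2 v3
  · exact contra331 hqs hij hik hjk hU1 hU2 hU3 hV1 hV3 hV2 hW hU1j hU1k hU2j hU2k hU3j hU3k
      hV1i hV1k hV3i hV3k hV2i hV2k hWi hWj hU1H hU2H hU3H hV1H hV3H hV2H hU12 hV13
      u1 u2 u3 v1 v2 v3
  · exact contra331 hqs hij hik hjk hU1 hU3 hU2 hV1 hV2 hV3 hW hU1j hU1k hU3j hU3k hU2j hU2k
      hV1i hV1k hV2i hV2k hV3i hV3k hWi hWj hU1H hU3H hU2H hV1H hV2H hV3H hU13 hV12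
      u1 u2 u3 v1 v2 v3
  · exact contra331 hqs hij hik hjk hU1 hU3 hU2 hV1 hV3 hV2 hW hU1j hU1k hU3j hU3k hU2j hU2k
      hV1i hV1k hV3i hV3k hV2i hV2k hWi hWj hU1H hU3H hU2H hV1H hV3H hV2H hU13 hV13
      u1 u2 u3 v1 v2 v3
end Contra331

section Contra322
variable {c : ℕ} {qs : List (Fin 3 → Fin c)}

lemma core322 (hqs : Feasible qs)
    {i j k : Fin 3} (hij : i ≠ j) (hik : i ≠ k) (hjk : j ≠ k)
    {U Un Up V1 V2 W1 W2 : Fin 3 → Fin c}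
    (hU : U ∈ qs) (hUn : Un ∈ qs) (hUp : Up ∈ qs)
    (hV1 : V1 ∈ qs) (hV2 : V2 ∈ qs) (hW1 : W1 ∈ qs) (hW2 : W2 ∈ qs)
    (hUj : occ qs j (U j) = 1) (hUk : occ qs k (U k) = 1)
    (hUnk : occ qs k (Un k) = 1) (hUpj : occ qs j (Up j) = 1)
    (hV1i : occ qs i (V1 i) = 1) (hV1k : occ qs k (V1 k) = 1)
    (hV2i : occ qs i (V2 i) = 1) (hV2k : occ qs k (V2 k) = 1)
    (hW1i : occ qs i (W1 i) = 1) (hW1j : occ qs j (W1 j) = 1)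
    (hW2i : occ qs i (W2 i) = 1) (hW2j : occ qs j (W2 j) = 1)
    (hUH : 2 ≤ occ qs i (U i)) (hUnH : 2 ≤ occ qs i (Un i)) (hUpH : 2 ≤ occ qs i (Up i))
    (hV1H : 2 ≤ occ qs j (V1 j)) (hV2H : 2 ≤ occ qs j (V2 j))
    (hUne : U j = Un k) (hUpe : Up j = U k)
    (hVe : V1 i = V2 k) (hWe : W1 i = W2 j)
    (hch1 : W2 i ≠ U j) (hch2 : V2 i ≠ U k)
    (hW12 : W1 ≠ W2) : False := by
  have hnd := hqs.1
  have hgp : V2 i = W2 j := by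
    rcases triple_lemma hqs hij hik hjk hU hV2 hW2 (ne_of_heavy hV2H hW2j)
        hUj hUk hV2i hV2k hW2i hW2j with h | h | h | h | h | h
    · exact absurd h hch1
    · rw [← hVe] at h
      exact absurd (uniq_eq hnd hV1 hW2 hV1i h) (ne_of_heavy hV1H hW2j).symm
    · rw [hUne] at h
      exact absurd (uniq_eq hnd hV2 hUn hV2k h) (ne_of_heavy hUnH hV2i)
    · exact h
    · exact absurd h hch2
    · rw [← hUpe] at h
      exact absurd (uniq_eq hnd hUp hW2 hUpj h) (ne_of_heavy hUpH hW2i).symm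
  have hgq : V2 i = W1 j := by
    rcases triple_lemma hqs hij hik hjk hU hV2 hW1 (ne_of_heavy hV2H hW1j)
        hUj hUk hV2i hV2k hW1i hW1j with h | h | h | h | h | h
    · rw [hWe] at h
      exact absurd (uniq_eq hnd hU hW2 hUj h) (ne_of_heavy hUH hW2i).symm
    · rw [← hVe] at h
      exact absurd (uniq_eq hnd hV1 hW1 hV1i h) (ne_of_heavy hV1H hW1j).symm
    · rw [hUne] at h
      exact absurd (uniq_eq hnd hV2 hUn hV2k h) (ne_of_heavy hUnH hV2i)
    · exact h
    · exact absurd h hch2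
    · rw [← hUpe] at h
      exact absurd (uniq_eq hnd hUp hW1 hUpj h) (ne_of_heavy hUpH hW1i).symm
  exact hW12 (uniq_eq hnd hW2 hW1 hW2j (hgq.symm.trans hgp))

lemma contra322 (hqs : Feasible qs)
    {i j k : Fin 3} (hij : i ≠ j) (hik : i ≠ k) (hjk : j ≠ k)
    {U1 U2 U3 V1 V2 W1 W2 : Fin 3 → Fin c}
    (hU1 : U1 ∈ qs) (hU2 : U2 ∈ qs) (hU3 : U3 ∈ qs)
    (hV1 : V1 ∈ qs) (hV2 : V2 ∈ qs) (hW1 : W1 ∈ qs) (hW2 : W2 ∈ qs)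
    (hU1j : occ qs j (U1 j) = 1) (hU1k : occ qs k (U1 k) = 1)
    (hU2j : occ qs j (U2 j) = 1) (hU2k : occ qs k (U2 k) = 1)
    (hU3j : occ qs j (U3 j) = 1) (hU3k : occ qs k (U3 k) = 1)
    (hV1i : occ qs i (V1 i) = 1) (hV1k : occ qs k (V1 k) = 1)
    (hV2i : occ qs i (V2 i) = 1) (hV2k : occ qs k (V2 k) = 1)
    (hW1i : occ qs i (W1 i) = 1) (hW1j : occ qs j (W1 j) = 1)
    (hW2i : occ qs i (W2 i) = 1) (hW2j : occ qs j (W2 j) = 1)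
    (hU1H : 2 ≤ occ qs i (U1 i)) (hU2H : 2 ≤ occ qs i (U2 i)) (hU3H : 2 ≤ occ qs i (U3 i))
    (hV1H : 2 ≤ occ qs j (V1 j)) (hV2H : 2 ≤ occ qs j (V2 j))
    (hU12 : U1 ≠ U2) (hU13 : U1 ≠ U3) (hU23 : U2 ≠ U3) (hW12 : W1 ≠ W2)
    (hU12e : U1 j = U2 k) (hU23e : U2 j = U3 k) (hU31e : U3 j = U1 k)
    (hVe : V1 i = V2 k) (hWe : W1 i = W2 j) : False := by
  have hnd := hqs.1
  by_cases ha1 : W2 i = U1 j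
  · have hne2 : W2 i ≠ U2 j := fun h => hU12 (uniq_eq hnd hU2 hU1 hU2j (ha1.symm.trans h))
    have hne3 : W2 i ≠ U3 j := fun h => hU13 (uniq_eq hnd hU3 hU1 hU3j (ha1.symm.trans h))
    by_cases hb : V2 i = U2 k
    · have hb3 : V2 i ≠ U3 k := fun h => hU23 (uniq_eq hnd hU3 hU2 hU3k (hb.symm.trans h))
      exact core322 hqs hij hik hjk hU3 hU1 hU2 hV1 hV2 hW1 hW2 hU3j hU3k hU1k hU2j
        hV1i hV1k hV2i hV2k hW1i hW1j hW2i hW2j hU3H hU1H hU2H hV1H hV2H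
        hU31e hU23e hVe hWe hne3 hb3 hW12
    · exact core322 hqs hij hik hjk hU2 hU3 hU1 hV1 hV2 hW1 hW2 hU2j hU2k hU3k hU1j
        hV1i hV1k hV2i hV2k hW1i hW1j hW2i hW2j hU2H hU3H hU1H hV1H hV2H
        hU23e hU12e hVe hWe hne2 hb hW12
  · by_cases hb : V2 i = U1 k
    · by_cases hc2 : W2 i = U2 j
      · have hne3 : W2 i ≠ U3 j := fun h => hU23 (uniq_eq hnd hU3 hU2 hU3j (hc2.symm.trans h))
        have hb3 : V2 i ≠ U3 k := fun h => hU13 (uniq_eq hnd hU3 hU1 hU3k (hb.symm.trans h))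
        exact core322 hqs hij hik hjk hU3 hU1 hU2 hV1 hV2 hW1 hW2 hU3j hU3k hU1k hU2j
          hV1i hV1k hV2i hV2k hW1i hW1j hW2i hW2j hU3H hU1H hU2H hV1H hV2H
          hU31e hU23e hVe hWe hne3 hb3 hW12
      · have hb2 : V2 i ≠ U2 k := fun h => hU12 (uniq_eq hnd hU2 hU1 hU2k (hb.symm.trans h))
        exact core322 hqs hij hik hjk hU2 hU3 hU1 hV1 hV2 hW1 hW2 hU2j hU2k hU3k hU1j
          hV1i hV1k hV2i hV2k hW1i hW1j hW2i hW2j hU2H hU3H hU1H hV1H hV2H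
          hU23e hU12e hVe hWe hc2 hb2 hW12
    · exact core322 hqs hij hik hjk hU1 hU2 hU3 hV1 hV2 hW1 hW2 hU1j hU1k hU2k hU3j
        hV1i hV1k hV2i hV2k hW1i hW1j hW2i hW2j hU1H hU2H hU3H hV1H hV2H
        hU12e hU31e hVe hWe ha1 hb hW12

lemma L322 (hqs : Feasible qs) (hc : 5 ≤ c)
    {i j k : Fin 3} (hij : i ≠ j) (hik : i ≠ k) (hjk : j ≠ k)
    {U1 U2 U3 V1 V2 W1 W2 : Fin 3 → Fin c}
    (hU1 : U1 ∈ qs) (hU2 : U2 ∈ qs) (hU3 : U3 ∈ qs)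
    (hV1 : V1 ∈ qs) (hV2 : V2 ∈ qs) (hW1 : W1 ∈ qs) (hW2 : W2 ∈ qs)
    (hU1j : occ qs j (U1 j) = 1) (hU1k : occ qs k (U1 k) = 1)
    (hU2j : occ qs j (U2 j) = 1) (hU2k : occ qs k (U2 k) = 1)
    (hU3j : occ qs j (U3 j) = 1) (hU3k : occ qs k (U3 k) = 1)
    (hV1i : occ qs i (V1 i) = 1) (hV1k : occ qs k (V1 k) = 1)
    (hV2i : occ qs i (V2 i) = 1) (hV2k : occ qs k (V2 k) = 1)
    (hW1i : occ qs i (W1 i) = 1) (hW1j : occ qs j (W1 j) = 1)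
    (hW2i : occ qs i (W2 i) = 1) (hW2j : occ qs j (W2 j) = 1)
    (hU1H : 2 ≤ occ qs i (U1 i)) (hU2H : 2 ≤ occ qs i (U2 i)) (hU3H : 2 ≤ occ qs i (U3 i))
    (hV1H : 2 ≤ occ qs j (V1 j)) (hV2H : 2 ≤ occ qs j (V2 j))
    (hU12 : U1 ≠ U2) (hU13 : U1 ≠ U3) (hU23 : U2 ≠ U3)
    (hV12 : V1 ≠ V2) (hW12 : W1 ≠ W2) : False := by
  have cycU := cyc_of_three hqs hc hjk hij.symm hik.symm hU1 hU2 hU3 hU12 hU13 hU23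
    hU1j hU1k hU2j hU2k hU3j hU3k
  have pV := pair_lemma hqs hc hik hij hjk.symm hV1 hV2 hV12 hV1i hV1k hV2i hV2k
  have pW := pair_lemma hqs hc hij hik hjk hW1 hW2 hW12 hW1i hW1j hW2i hW2j
  rcases cycU with ⟨u1, u2, u3⟩ | ⟨u1, u2, u3⟩ <;> rcases pV with hv | hv <;>
    rcases pW with hw | hw
  · exact contra322 hqs hij hik hjk hU1 hU2 hU3 hV1 hV2 hW1 hW2 hU1j hU1k hU2j hU2k hU3j hU3k
      hV1i hV1k hV2i hV2k hW1i hW1j hW2i hW2j hU1H hU2H hU3H hV1H hV2H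
      hU12 hU13 hU23 hW12 u1 u2 u3 hv hw
  · exact contra322 hqs hij hik hjk hU1 hU2 hU3 hV1 hV2 hW2 hW1 hU1j hU1k hU2j hU2k hU3j hU3k
      hV1i hV1k hV2i hV2k hW2i hW2j hW1i hW1j hU1H hU2H hU3H hV1H hV2H
      hU12 hU13 hU23 hW12.symm u1 u2 u3 hv hw
  · exact contra322 hqs hij hik hjk hU1 hU2 hU3 hV2 hV1 hW1 hW2 hU1j hU1k hU2j hU2k hU3j hU3k
      hV2i hV2k hV1i hV1k hW1i hW1j hW2i hW2j hU1H hU2H hU3H hV2H hV1H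
      hU12 hU13 hU23 hW12 u1 u2 u3 hv hw
  · exact contra322 hqs hij hik hjk hU1 hU2 hU3 hV2 hV1 hW2 hW1 hU1j hU1k hU2j hU2k hU3j hU3k
      hV2i hV2k hV1i hV1k hW2i hW2j hW1i hW1j hU1H hU2H hU3H hV2H hV1H
      hU12 hU13 hU23 hW12.symm u1 u2 u3 hv hw
  · exact contra322 hqs hij hik hjk hU1 hU3 hU2 hV1 hV2 hW1 hW2 hU1j hU1k hU3j hU3k hU2j hU2k
      hV1i hV1k hV2i hV2k hW1i hW1j hW2i hW2j hU1H hU3H hU2H hV1H hV2H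
      hU13 hU12 (Ne.symm hU23) hW12 u1 u2 u3 hv hw
  · exact contra322 hqs hij hik hjk hU1 hU3 hU2 hV1 hV2 hW2 hW1 hU1j hU1k hU3j hU3k hU2j hU2k
      hV1i hV1k hV2i hV2k hW2i hW2j hW1i hW1j hU1H hU3H hU2H hV1H hV2H
      hU13 hU12 (Ne.symm hU23) hW12.symm u1 u2 u3 hv hw
  · exact contra322 hqs hij hik hjk hU1 hU3 hU2 hV2 hV1 hW1 hW2 hU1j hU1k hU3j hU3k hU2j hU2k
      hV2i hV2k hV1i hV1k hW1i hW1j hW2i hW2j hU1H hU3H hU2H hV2H hV1H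
      hU13 hU12 (Ne.symm hU23) hW12 u1 u2 u3 hv hw
  · exact contra322 hqs hij hik hjk hU1 hU3 hU2 hV2 hV1 hW2 hW1 hU1j hU1k hU3j hU3k hU2j hU2k
      hV2i hV2k hV1i hV1k hW2i hW2j hW1i hW1j hU1H hU3H hU2H hV2H hV1H
      hU13 hU12 (Ne.symm hU23) hW12.symm u1 u2 u3 hv hw
end Contra322

lemma ex2' {β : Type*} [DecidableEq β] {s : Finset β} (h : 2 ≤ s.card) :
    ∃ x y, x ∈ s ∧ y ∈ s ∧ x ≠ y := by
  have h1 : 1 < s.card := by omega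
  obtain ⟨x, hx, y, hy, hxy⟩ := Finset.one_lt_card.1 h1
  exact ⟨x, y, hx, hy, hxy⟩

lemma ex3' {β : Type*} [DecidableEq β] {s : Finset β} (h : 3 ≤ s.card) :
    ∃ x y z, x ∈ s ∧ y ∈ s ∧ z ∈ s ∧ x ≠ y ∧ x ≠ z ∧ y ≠ z := by
  obtain ⟨t, hts, htc⟩ := Finset.exists_subset_card_eq h
  obtain ⟨x, y, z, hxy, hxz, hyz, rfl⟩ := Finset.card_eq_three.1 htc
  exact ⟨x, y, z, hts (by simp), hts (by simp), hts (by simp), hxy, hxz, hyz⟩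

lemma ex4' {β : Type*} [DecidableEq β] {s : Finset β} (h : 4 ≤ s.card) :
    ∃ w x y z, w ∈ s ∧ x ∈ s ∧ y ∈ s ∧ z ∈ s ∧
      w ≠ x ∧ w ≠ y ∧ w ≠ z ∧ x ≠ y ∧ x ≠ z ∧ y ≠ z := by
  obtain ⟨t, hts, htc⟩ := Finset.exists_subset_card_eq h
  obtain ⟨w, hw⟩ := Finset.card_pos.1 (by omega : 0 < t.card)
  have h3 : (t.erase w).card = 3 := by rw [Finset.card_erase_of_mem hw]; omega
  obtain ⟨x, y, z, hxy, hxz, hyz, he⟩ := Finset.card_eq_three.1 h3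
  have hx : x ∈ t.erase w := by rw [he]; simp
  have hy : y ∈ t.erase w := by rw [he]; simp
  have hz : z ∈ t.erase w := by rw [he]; simp
  exact ⟨w, x, y, z, hts hw, hts (Finset.mem_of_mem_erase hx),
    hts (Finset.mem_of_mem_erase hy), hts (Finset.mem_of_mem_erase hz),
    (Finset.ne_of_mem_erase hx).symm, (Finset.ne_of_mem_erase hy).symm,
    (Finset.ne_of_mem_erase hz).symm, hxy, hxz, hyz⟩


def PA' {c : ℕ} (qs : List (Fin 3 → Fin c)) (Q : Fin 3 → Fin c) : Prop :=
  2 ≤ occ qs 0 (Q 0) ∧ occ qs 1 (Q 1) = 1 ∧ occ qs 2 (Q 2) = 1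

def PB' {c : ℕ} (qs : List (Fin 3 → Fin c)) (Q : Fin 3 → Fin c) : Prop :=
  occ qs 0 (Q 0) = 1 ∧ 2 ≤ occ qs 1 (Q 1) ∧ occ qs 2 (Q 2) = 1

def PC' {c : ℕ} (qs : List (Fin 3 → Fin c)) (Q : Fin 3 → Fin c) : Prop :=
  occ qs 0 (Q 0) = 1 ∧ occ qs 1 (Q 1) = 1 ∧ 2 ≤ occ qs 2 (Q 2)

instance {c : ℕ} (qs : List (Fin 3 → Fin c)) : DecidablePred (PA' qs) :=
  fun Q => by unfold PA'; infer_instance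
instance {c : ℕ} (qs : List (Fin 3 → Fin c)) : DecidablePred (PB' qs) :=
  fun Q => by unfold PB'; infer_instance
instance {c : ℕ} (qs : List (Fin 3 → Fin c)) : DecidablePred (PC' qs) :=
  fun Q => by unfold PC'; infer_instance


def SA' {c : ℕ} (qs : List (Fin 3 → Fin c)) : Finset (Fin 3 → Fin c) :=
  qs.toFinset.filter (PA' qs)
def SB' {c : ℕ} (qs : List (Fin 3 → Fin c)) : Finset (Fin 3 → Fin c) :=
  qs.toFinset.filter (PB' qs)
def SC' {c : ℕ} (qs : List (Fin 3 → Fin c)) : Finset (Fin 3 → Fin c) :=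
  qs.toFinset.filter (PC' qs)


theorem statement18 (c : ℕ) (hc : 5 ≤ c) (qs : List (Fin 3 → Fin c))
    (hqs : Feasible qs)
    (hno : ∀ Q ∈ qs, ¬ ∀ i : Fin 3, occ qs i (Q i) = 1) :
    qs.countP (fun Q => decide
      ((2 ≤ occ qs 0 (Q 0) ∧ occ qs 1 (Q 1) = 1 ∧ occ qs 2 (Q 2) = 1) ∨
       (occ qs 0 (Q 0) = 1 ∧ 2 ≤ occ qs 1 (Q 1) ∧ occ qs 2 (Q 2) = 1) ∨
       (occ qs 0 (Q 0) = 1 ∧ occ qs 1 (Q 1) = 1 ∧ 2 ≤ occ qs 2 (Q 2)))) ≤ 6 := by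
  have hnd := hqs.1
  by_contra hcon
  push_neg at hcon
  have key : qs.countP (fun Q => decide
      ((2 ≤ occ qs 0 (Q 0) ∧ occ qs 1 (Q 1) = 1 ∧ occ qs 2 (Q 2) = 1) ∨
       (occ qs 0 (Q 0) = 1 ∧ 2 ≤ occ qs 1 (Q 1) ∧ occ qs 2 (Q 2) = 1) ∨
       (occ qs 0 (Q 0) = 1 ∧ occ qs 1 (Q 1) = 1 ∧ 2 ≤ occ qs 2 (Q 2))))
      = (qs.toFinset.filter (fun Q => PA' qs Q ∨ PB' qs Q ∨ PC' qs Q)).card := by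
    rw [List.countP_eq_length_filter, ← List.toFinset_card_of_nodup (hnd.filter _),
      List.toFinset_filter]
    congr 1
    apply Finset.filter_congr
    intro x _
    simp [PA', PB', PC']
  have hsplit : (qs.toFinset.filter (fun Q => PA' qs Q ∨ PB' qs Q ∨ PC' qs Q)).card ≤
      (SA' qs).card + ((SB' qs).card + (SC' qs).card) := by
    rw [Finset.filter_or, Finset.filter_or]
    refine le_trans (Finset.card_union_le _ _) ?_
    refine Nat.add_le_add (le_of_eq ?_) (le_trans (Finset.card_union_le _ _)
      (Nat.add_le_add (le_of_eq ?_) (le_of_eq ?_)))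
    · rfl
    · rfl
    · rfl
  have hsum : 7 ≤ (SA' qs).card + ((SB' qs).card + (SC' qs).card) :=
    le_trans (Nat.succ_le_of_lt (key ▸ hcon)) hsplit
  clear hcon key hsplit
  have memA : ∀ Q ∈ SA' qs, Q ∈ qs ∧ PA' qs Q := by
    intro Q h
    simp only [SA', Finset.mem_filter, List.mem_toFinset] at h
    exact h
  have memB : ∀ Q ∈ SB' qs, Q ∈ qs ∧ PB' qs Q := by
    intro Q h
    simp only [SB', Finset.mem_filter, List.mem_toFinset] at h
    exact h
  have memC : ∀ Q ∈ SC' qs, Q ∈ qs ∧ PC' qs Q := by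
    intro Q h
    simp only [SC', Finset.mem_filter, List.mem_toFinset] at h
    exact h
  have hA3 : (SA' qs).card ≤ 3 := by
    by_contra h
    push_neg at h
    have h4 : 4 ≤ (SA' qs).card := by omega
    obtain ⟨Q1, Q2, Q3, Q4, m1, m2, m3, m4, n12, n13, n14, n23, n24, n34⟩ := ex4' h4
    obtain ⟨q1, p1⟩ := memA _ m1; obtain ⟨q2, p2⟩ := memA _ m2
    obtain ⟨q3, p3⟩ := memA _ m3; obtain ⟨q4, p4⟩ := memA _ m4
    exact four_lemma hqs hc (a := 1) (b := 2) (g := 0) (by decide) (by decide) (by decide)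
      q1 q2 q3 q4 n12 n13 n14 n23 n24 n34
      p1.2.1 p1.2.2 p2.2.1 p2.2.2 p3.2.1 p3.2.2 p4.2.1 p4.2.2
  have hB3 : (SB' qs).card ≤ 3 := by
    by_contra h
    push_neg at h
    have h4 : 4 ≤ (SB' qs).card := by omega
    obtain ⟨Q1, Q2, Q3, Q4, m1, m2, m3, m4, n12, n13, n14, n23, n24, n34⟩ := ex4' h4
    obtain ⟨q1, p1⟩ := memB _ m1; obtain ⟨q2, p2⟩ := memB _ m2
    obtain ⟨q3, p3⟩ := memB _ m3; obtain ⟨q4, p4⟩ := memB _ m4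
    exact four_lemma hqs hc (a := 0) (b := 2) (g := 1) (by decide) (by decide) (by decide)
      q1 q2 q3 q4 n12 n13 n14 n23 n24 n34
      p1.1 p1.2.2 p2.1 p2.2.2 p3.1 p3.2.2 p4.1 p4.2.2
  have hC3 : (SC' qs).card ≤ 3 := by
    by_contra h
    push_neg at h
    have h4 : 4 ≤ (SC' qs).card := by omega
    obtain ⟨Q1, Q2, Q3, Q4, m1, m2, m3, m4, n12, n13, n14, n23, n24, n34⟩ := ex4' h4
    obtain ⟨q1, p1⟩ := memC _ m1; obtain ⟨q2, p2⟩ := memC _ m2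
    obtain ⟨q3, p3⟩ := memC _ m3; obtain ⟨q4, p4⟩ := memC _ m4
    exact four_lemma hqs hc (a := 0) (b := 1) (g := 2) (by decide) (by decide) (by decide)
      q1 q2 q3 q4 n12 n13 n14 n23 n24 n34
      p1.1 p1.2.1 p2.1 p2.2.1 p3.1 p3.2.1 p4.1 p4.2.1
  have h331a : ¬(3 ≤ (SA' qs).card ∧ 3 ≤ (SB' qs).card ∧ 1 ≤ (SC' qs).card) := by
    rintro ⟨ha, hb, hc1⟩
    obtain ⟨U1, U2, U3, mU1, mU2, mU3, nU12, nU13, nU23⟩ := ex3' ha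
    obtain ⟨V1, V2, V3, mV1, mV2, mV3, nV12, nV13, nV23⟩ := ex3' hb
    obtain ⟨W, mW⟩ := Finset.card_pos.1 (by omega : 0 < (SC' qs).card)
    obtain ⟨qU1, pU1⟩ := memA _ mU1; obtain ⟨qU2, pU2⟩ := memA _ mU2
    obtain ⟨qU3, pU3⟩ := memA _ mU3
    obtain ⟨qV1, pV1⟩ := memB _ mV1; obtain ⟨qV2, pV2⟩ := memB _ mV2
    obtain ⟨qV3, pV3⟩ := memB _ mV3
    obtain ⟨qW, pW⟩ := memC _ mW
    exact L331 hqs hc (i := 0) (j := 1) (k := 2) (by decide) (by decide) (by decide)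
      qU1 qU2 qU3 qV1 qV2 qV3 qW
      pU1.2.1 pU1.2.2 pU2.2.1 pU2.2.2 pU3.2.1 pU3.2.2
      pV1.1 pV1.2.2 pV2.1 pV2.2.2 pV3.1 pV3.2.2
      pW.1 pW.2.1
      pU1.1 pU2.1 pU3.1 pV1.2.1 pV2.2.1 pV3.2.1
      nU12 nU13 nU23 nV12 nV13 nV23
  have h331b : ¬(3 ≤ (SB' qs).card ∧ 3 ≤ (SC' qs).card ∧ 1 ≤ (SA' qs).card) := by
    rintro ⟨ha, hb, hc1⟩
    obtain ⟨U1, U2, U3, mU1, mU2, mU3, nU12, nU13, nU23⟩ := ex3' ha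
    obtain ⟨V1, V2, V3, mV1, mV2, mV3, nV12, nV13, nV23⟩ := ex3' hb
    obtain ⟨W, mW⟩ := Finset.card_pos.1 (by omega : 0 < (SA' qs).card)
    obtain ⟨qU1, pU1⟩ := memB _ mU1; obtain ⟨qU2, pU2⟩ := memB _ mU2
    obtain ⟨qU3, pU3⟩ := memB _ mU3
    obtain ⟨qV1, pV1⟩ := memC _ mV1; obtain ⟨qV2, pV2⟩ := memC _ mV2
    obtain ⟨qV3, pV3⟩ := memC _ mV3
    obtain ⟨qW, pW⟩ := memA _ mW
    exact L331 hqs hc (i := 1) (j := 2) (k := 0) (by decide) (by decide) (by decide)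
      qU1 qU2 qU3 qV1 qV2 qV3 qW
      pU1.2.2 pU1.1 pU2.2.2 pU2.1 pU3.2.2 pU3.1
      pV1.2.1 pV1.1 pV2.2.1 pV2.1 pV3.2.1 pV3.1
      pW.2.1 pW.2.2
      pU1.2.1 pU2.2.1 pU3.2.1 pV1.2.2 pV2.2.2 pV3.2.2
      nU12 nU13 nU23 nV12 nV13 nV23
  have h331c : ¬(3 ≤ (SC' qs).card ∧ 3 ≤ (SA' qs).card ∧ 1 ≤ (SB' qs).card) := by
    rintro ⟨ha, hb, hc1⟩
    obtain ⟨U1, U2, U3, mU1, mU2, mU3, nU12, nU13, nU23⟩ := ex3' ha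
    obtain ⟨V1, V2, V3, mV1, mV2, mV3, nV12, nV13, nV23⟩ := ex3' hb
    obtain ⟨W, mW⟩ := Finset.card_pos.1 (by omega : 0 < (SB' qs).card)
    obtain ⟨qU1, pU1⟩ := memC _ mU1; obtain ⟨qU2, pU2⟩ := memC _ mU2
    obtain ⟨qU3, pU3⟩ := memC _ mU3
    obtain ⟨qV1, pV1⟩ := memA _ mV1; obtain ⟨qV2, pV2⟩ := memA _ mV2
    obtain ⟨qV3, pV3⟩ := memA _ mV3
    obtain ⟨qW, pW⟩ := memB _ mW
    exact L331 hqs hc (i := 2) (j := 0) (k := 1) (by decide) (by decide) (by decide)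
      qU1 qU2 qU3 qV1 qV2 qV3 qW
      pU1.1 pU1.2.1 pU2.1 pU2.2.1 pU3.1 pU3.2.1
      pV1.2.2 pV1.2.1 pV2.2.2 pV2.2.1 pV3.2.2 pV3.2.1
      pW.2.2 pW.1
      pU1.2.2 pU2.2.2 pU3.2.2 pV1.1 pV2.1 pV3.1
      nU12 nU13 nU23 nV12 nV13 nV23
  have h322a : ¬(3 ≤ (SA' qs).card ∧ 2 ≤ (SB' qs).card ∧ 2 ≤ (SC' qs).card) := by
    rintro ⟨ha, hb, hc1⟩
    obtain ⟨U1, U2, U3, mU1, mU2, mU3, nU12, nU13, nU23⟩ := ex3' ha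
    obtain ⟨V1, V2, mV1, mV2, nV12⟩ := ex2' hb
    obtain ⟨W1, W2, mW1, mW2, nW12⟩ := ex2' hc1
    obtain ⟨qU1, pU1⟩ := memA _ mU1; obtain ⟨qU2, pU2⟩ := memA _ mU2
    obtain ⟨qU3, pU3⟩ := memA _ mU3
    obtain ⟨qV1, pV1⟩ := memB _ mV1; obtain ⟨qV2, pV2⟩ := memB _ mV2
    obtain ⟨qW1, pW1⟩ := memC _ mW1; obtain ⟨qW2, pW2⟩ := memC _ mW2
    exact L322 hqs hc (i := 0) (j := 1) (k := 2) (by decide) (by decide) (by decide)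
      qU1 qU2 qU3 qV1 qV2 qW1 qW2
      pU1.2.1 pU1.2.2 pU2.2.1 pU2.2.2 pU3.2.1 pU3.2.2
      pV1.1 pV1.2.2 pV2.1 pV2.2.2
      pW1.1 pW1.2.1 pW2.1 pW2.2.1
      pU1.1 pU2.1 pU3.1 pV1.2.1 pV2.2.1
      nU12 nU13 nU23 nV12 nW12
  have h322b : ¬(3 ≤ (SB' qs).card ∧ 2 ≤ (SC' qs).card ∧ 2 ≤ (SA' qs).card) := by
    rintro ⟨ha, hb, hc1⟩
    obtain ⟨U1, U2, U3, mU1, mU2, mU3, nU12, nU13, nU23⟩ := ex3' ha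
    obtain ⟨V1, V2, mV1, mV2, nV12⟩ := ex2' hb
    obtain ⟨W1, W2, mW1, mW2, nW12⟩ := ex2' hc1
    obtain ⟨qU1, pU1⟩ := memB _ mU1; obtain ⟨qU2, pU2⟩ := memB _ mU2
    obtain ⟨qU3, pU3⟩ := memB _ mU3
    obtain ⟨qV1, pV1⟩ := memC _ mV1; obtain ⟨qV2, pV2⟩ := memC _ mV2
    obtain ⟨qW1, pW1⟩ := memA _ mW1; obtain ⟨qW2, pW2⟩ := memA _ mW2
    exact L322 hqs hc (i := 1) (j := 2) (k := 0) (by decide) (by decide) (by decide)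
      qU1 qU2 qU3 qV1 qV2 qW1 qW2
      pU1.2.2 pU1.1 pU2.2.2 pU2.1 pU3.2.2 pU3.1
      pV1.2.1 pV1.1 pV2.2.1 pV2.1
      pW1.2.1 pW1.2.2 pW2.2.1 pW2.2.2
      pU1.2.1 pU2.2.1 pU3.2.1 pV1.2.2 pV2.2.2
      nU12 nU13 nU23 nV12 nW12
  have h322c : ¬(3 ≤ (SC' qs).card ∧ 2 ≤ (SA' qs).card ∧ 2 ≤ (SB' qs).card) := by
    rintro ⟨ha, hb, hc1⟩
    obtain ⟨U1, U2, U3, mU1, mU2, mU3, nU12, nU13, nU23⟩ := ex3' ha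
    obtain ⟨V1, V2, mV1, mV2, nV12⟩ := ex2' hb
    obtain ⟨W1, W2, mW1, mW2, nW12⟩ := ex2' hc1
    obtain ⟨qU1, pU1⟩ := memC _ mU1; obtain ⟨qU2, pU2⟩ := memC _ mU2
    obtain ⟨qU3, pU3⟩ := memC _ mU3
    obtain ⟨qV1, pV1⟩ := memA _ mV1; obtain ⟨qV2, pV2⟩ := memA _ mV2
    obtain ⟨qW1, pW1⟩ := memB _ mW1; obtain ⟨qW2, pW2⟩ := memB _ mW2
    exact L322 hqs hc (i := 2) (j := 0) (k := 1) (by decide) (by decide) (by decide)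
      qU1 qU2 qU3 qV1 qV2 qW1 qW2
      pU1.1 pU1.2.1 pU2.1 pU2.2.1 pU3.1 pU3.2.1
      pV1.2.2 pV1.2.1 pV2.2.2 pV2.2.1
      pW1.2.2 pW1.1 pW2.2.2 pW2.1
      pU1.2.2 pU2.2.2 pU3.2.2 pV1.1 pV2.1
      nU12 nU13 nU23 nV12 nW12
  omega
end

section
/- For the Static Black-Peg AB Game with 3 pegs and c ≥ 5 colors: if a feasible strategy contains no (1,1,1)-question and there exist two distinct pegs such that on each of them some color is missing, then the strategy contains in total at most five questions that are (1,1,≥2)-questions, (1,≥2,1)-questions, or (≥2,1,1)-questions. -/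
namespace AB19

variable {c : ℕ}

abbrev Code (c : ℕ) := Fin 3 → Fin c

lemma fin3_mem (a b k i : Fin 3) (hab : a ≠ b) (hak : a ≠ k) (hbk : b ≠ k) :
    i = a ∨ i = b ∨ i = k := by revert a b k i; decide

lemma univ3 (a b k : Fin 3) (hab : a ≠ b) (hak : a ≠ k) (hbk : b ≠ k) :
    (Finset.univ : Finset (Fin 3)) = {a, b, k} := by revert a b k; decide

def mk3 (a b k : Fin 3) (x y z : Fin c) : Code c :=
  fun i => if i = a then x else if i = b then y else z

lemma mk3_a (a b k : Fin 3) (x y z : Fin c) : mk3 a b k x y z a = x := by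
  simp [mk3]

lemma mk3_b (a b k : Fin 3) (hab : a ≠ b) (x y z : Fin c) : mk3 a b k x y z b = y := by
  simp [mk3, Ne.symm hab]

lemma mk3_k (a b k : Fin 3) (hak : a ≠ k) (hbk : b ≠ k) (x y z : Fin c) :
    mk3 a b k x y z k = z := by
  simp [mk3, Ne.symm hak, Ne.symm hbk]

lemma mk3_inj (a b k : Fin 3) (hab : a ≠ b) (hak : a ≠ k) (hbk : b ≠ k)
    (x y z : Fin c) (hxy : x ≠ y) (hxz : x ≠ z) (hyz : y ≠ z) :
    Function.Injective (mk3 a b k x y z) := by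
  have hba := Ne.symm hab; have hka := Ne.symm hak; have hkb := Ne.symm hbk
  have hyx := Ne.symm hxy; have hzx := Ne.symm hxz; have hzy := Ne.symm hyz
  intro i j h
  rcases fin3_mem a b k i hab hak hbk with hi | hi | hi <;>
    rcases fin3_mem a b k j hab hak hbk with hj | hj | hj <;>
    rw [hi, hj] at h ⊢ <;>
    simp [mk3, hab, hak, hbk, hba, hka, hkb, hxy, hxz, hyz, hyx, hzx, hzy] at h ⊢

lemma answer3 (a b k : Fin 3) (hab : a ≠ b) (hak : a ≠ k) (hbk : b ≠ k)
    (Q S : Code c) :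
    answer Q S = (if Q a = S a then 1 else 0) + (if Q b = S b then 1 else 0)
      + (if Q k = S k then 1 else 0) := by
  rw [answer, Finset.card_filter, univ3 a b k hab hak hbk]
  rw [show ({a, b, k} : Finset (Fin 3)) = insert a (insert b {k}) from rfl]
  rw [Finset.sum_insert (by simp [hab, hak]), Finset.sum_insert (by simp [hbk]),
    Finset.sum_singleton, add_assoc]

lemma two_le_length {α : Type*} [DecidableEq α] {l : List α} {x y : α}
    (hx : x ∈ l) (hy : y ∈ l) (hxy : x ≠ y) : 2 ≤ l.length := by
  have h1 : ({x, y} : Finset α) ⊆ l.toFinset := by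
    intro z hz
    rcases Finset.mem_insert.mp hz with rfl | hz
    · exact List.mem_toFinset.mpr hx
    · rw [Finset.mem_singleton] at hz; subst hz; exact List.mem_toFinset.mpr hy
  have h2 := Finset.card_le_card h1
  rw [Finset.card_pair hxy] at h2
  exact h2.trans l.toFinset_card_le

lemma occ_unique {qs : List (Code c)} {i : Fin 3} {q : Fin c}
    (h1 : occ qs i q = 1) {W : Code c} (hW : W ∈ qs) (hWi : W i = q)
    {P : Code c} (hP : P ∈ qs) (hPi : P i = q) : P = W := by
  by_contra hne
  have hx : P ∈ qs.filter (fun Q => decide (Q i = q)) :=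
    List.mem_filter.mpr ⟨hP, by simp [hPi]⟩
  have hy : W ∈ qs.filter (fun Q => decide (Q i = q)) :=
    List.mem_filter.mpr ⟨hW, by simp [hWi]⟩
  have h2 := two_le_length hx hy hne
  have h1' : (qs.filter (fun Q => decide (Q i = q))).length = 1 := by
    rw [← List.countP_eq_length_filter]; exact h1
  rw [h1'] at h2
  exact Nat.not_succ_le_self 1 h2

lemma eq_of_occ1 {qs : List (Code c)} {i : Fin 3} {X Y : Code c}
    (hX : X ∈ qs) (hY : Y ∈ qs) (h1 : occ qs i (Y i) = 1) (e : X i = Y i) : X = Y :=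
  occ_unique h1 hY rfl hX e

lemma ne_of_heavy {qs : List (Code c)} {i : Fin 3} {X Y : Code c}
    (hX : 2 ≤ occ qs i (X i)) (hY : occ qs i (Y i) = 1) : X ≠ Y := by
  intro e; rw [e, hY] at hX; omega

lemma ite_unique {qs : List (Code c)} {i : Fin 3} {W : Code c}
    (hocc : occ qs i (W i) = 1) (hW : W ∈ qs) {P : Code c} (hP : P ∈ qs) :
    (if P i = W i then 1 else 0 : ℕ) = if P = W then 1 else 0 := by
  by_cases h : P i = W i
  · rw [if_pos h, if_pos (occ_unique hocc hW rfl hP h)]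
  · rw [if_neg h, if_neg fun e => h (by rw [e])]

lemma ite_missing {qs : List (Code c)} {i : Fin 3} {m : Fin c}
    (hm : ∀ P ∈ qs, P i ≠ m) {P : Code c} (hP : P ∈ qs) :
    (if P i = m then 1 else 0 : ℕ) = 0 :=
  if_neg (hm P hP)

lemma confuse {qs : List (Code c)} (hqs : Feasible qs) {S S' : Code c}
    (hS : Function.Injective S) (hS' : Function.Injective S')
    (h : ∀ P ∈ qs, answer P S = answer P S') : S = S' :=
  hqs.2.2 S S' hS hS' (List.map_congr_left h)

lemma exists_avoid (hc : 5 ≤ c) (x1 x2 x3 x4 : Fin c) :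
    ∃ x : Fin c, x ≠ x1 ∧ x ≠ x2 ∧ x ≠ x3 ∧ x ≠ x4 := by
  by_contra hcon
  push_neg at hcon
  have hsub : (Finset.univ : Finset (Fin c)) ⊆ {x1, x2, x3, x4} := by
    intro x _
    by_cases e1 : x = x1; · simp [e1]
    by_cases e2 : x = x2; · simp [e2]
    by_cases e3 : x = x3; · simp [e3]
    simp [hcon x e1 e2 e3]
  have h1 := Finset.card_le_card hsub
  have h2 : ({x1, x2, x3, x4} : Finset (Fin c)).card ≤ 4 := by
    have c1 := Finset.card_insert_le x1 ({x2, x3, x4} : Finset (Fin c))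
    have c2 := Finset.card_insert_le x2 ({x3, x4} : Finset (Fin c))
    have c3 := Finset.card_insert_le x3 ({x4} : Finset (Fin c))
    have c4 : ({x4} : Finset (Fin c)).card = 1 := Finset.card_singleton x4
    omega
  rw [Finset.card_univ, Fintype.card_fin] at h1
  omega

section Base

variable {qs : List (Code c)}

lemma L_pair (hqs : Feasible qs) (hc : 5 ≤ c)
    (p q r : Fin 3) (hpq : p ≠ q) (hpr : p ≠ r) (hqr : q ≠ r)
    {X Y : Code c} (hX : X ∈ qs) (hY : Y ∈ qs) (hXY : X ≠ Y)
    (hXq : occ qs q (X q) = 1) (hXr : occ qs r (X r) = 1)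
    (hYq : occ qs q (Y q) = 1) (hYr : occ qs r (Y r) = 1) :
    X q = Y r ∨ Y q = X r := by
  by_contra hcon
  push_neg at hcon
  obtain ⟨h1, h2⟩ := hcon
  obtain ⟨x, hx1, hx2, hx3, hx4⟩ := exists_avoid hc (X q) (Y r) (Y q) (X r)
  have hS : Function.Injective (mk3 p q r x (X q) (Y r)) :=
    mk3_inj p q r hpq hpr hqr _ _ _ hx1 hx2 h1
  have hS' : Function.Injective (mk3 p q r x (Y q) (X r)) :=
    mk3_inj p q r hpq hpr hqr _ _ _ hx3 hx4 h2
  have heq : mk3 p q r x (X q) (Y r) = mk3 p q r x (Y q) (X r) := by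
    refine confuse hqs hS hS' (fun P hP => ?_)
    rw [answer3 p q r hpq hpr hqr, answer3 p q r hpq hpr hqr]
    rw [mk3_a, mk3_b p q r hpq, mk3_k p q r hpr hqr,
        mk3_a, mk3_b p q r hpq, mk3_k p q r hpr hqr]
    rw [ite_unique hXq hX hP, ite_unique hYr hY hP, ite_unique hYq hY hP,
        ite_unique hXr hX hP]
    by_cases e1 : P = X <;> by_cases e2 : P = Y <;> simp [e1, e2] <;> ring
  have hq : X q = Y q := by
    have := congrFun heq q
    rwa [mk3_b p q r hpq, mk3_b p q r hpq] at this
  exact hXY (eq_of_occ1 hX hY hYq hq)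

lemma L_single (hqs : Feasible qs) (hc : 5 ≤ c)
    (p q r : Fin 3) (hpq : p ≠ q) (hpr : p ≠ r) (hqr : q ≠ r)
    {mp mq : Fin c} (hmp : ∀ P ∈ qs, P p ≠ mp) (hmq : ∀ P ∈ qs, P q ≠ mq)
    {R : Code c} (hR : R ∈ qs)
    (hRp : occ qs p (R p) = 1) (hRq : occ qs q (R q) = 1) :
    R p = mq ∨ R q = mp := by
  by_contra hcon
  push_neg at hcon
  obtain ⟨h1, h2⟩ := hcon
  obtain ⟨x, hx1, hx2, hx3, hx4⟩ := exists_avoid hc (R p) mq mp (R q)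
  have hS : Function.Injective (mk3 p q r (R p) mq x) :=
    mk3_inj p q r hpq hpr hqr _ _ _ h1 (Ne.symm hx1) (Ne.symm hx2)
  have hS' : Function.Injective (mk3 p q r mp (R q) x) :=
    mk3_inj p q r hpq hpr hqr _ _ _ (fun e => h2 e.symm) (Ne.symm hx3) (Ne.symm hx4)
  have heq : mk3 p q r (R p) mq x = mk3 p q r mp (R q) x := by
    refine confuse hqs hS hS' (fun P hP => ?_)
    rw [answer3 p q r hpq hpr hqr, answer3 p q r hpq hpr hqr]
    rw [mk3_a, mk3_b p q r hpq, mk3_k p q r hpr hqr,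
        mk3_a, mk3_b p q r hpq, mk3_k p q r hpr hqr]
    rw [ite_unique hRp hR hP, ite_missing hmq hP, ite_missing hmp hP,
        ite_unique hRq hR hP]
    by_cases e1 : P = R <;> simp [e1]
  have hp : R p = mp := by
    have := congrFun heq p
    rwa [mk3_a, mk3_a] at this
  exact hmp R hR hp

lemma L_two (hqs : Feasible qs)
    (a b k : Fin 3) (hab : a ≠ b) (hak : a ≠ k) (hbk : b ≠ k)
    {ma mb : Fin c} (hma : ∀ P ∈ qs, P a ≠ ma) (hmb : ∀ P ∈ qs, P b ≠ mb)
    {X X' : Code c} (hX : X ∈ qs) (hX' : X' ∈ qs)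
    (hXb : occ qs b (X b) = 1) (hXk : occ qs k (X k) = 1)
    (hX'a : occ qs a (X' a) = 1) (hX'k : occ qs k (X' k) = 1) :
    X' a = mb ∨ X' a = X k ∨ mb = X k ∨ ma = X b ∨ ma = X' k ∨ X b = X' k := by
  by_contra hcon
  push_neg at hcon
  obtain ⟨h1, h2, h3, h4, h5, h6⟩ := hcon
  have hS : Function.Injective (mk3 a b k (X' a) mb (X k)) :=
    mk3_inj a b k hab hak hbk _ _ _ h1 h2 h3
  have hS' : Function.Injective (mk3 a b k ma (X b) (X' k)) :=
    mk3_inj a b k hab hak hbk _ _ _ h4 h5 h6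
  have heq : mk3 a b k (X' a) mb (X k) = mk3 a b k ma (X b) (X' k) := by
    refine confuse hqs hS hS' (fun P hP => ?_)
    rw [answer3 a b k hab hak hbk, answer3 a b k hab hak hbk]
    rw [mk3_a, mk3_b a b k hab, mk3_k a b k hak hbk,
        mk3_a, mk3_b a b k hab, mk3_k a b k hak hbk]
    rw [ite_unique hX'a hX' hP, ite_missing hmb hP, ite_unique hXk hX hP,
        ite_missing hma hP, ite_unique hXb hX hP, ite_unique hX'k hX' hP]
    by_cases e1 : P = X <;> by_cases e2 : P = X' <;> simp [e1, e2] <;> ring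
  have hp : X' a = ma := by
    have := congrFun heq a
    rwa [mk3_a, mk3_a] at this
  exact hma X' hX' hp

lemma L_three (hqs : Feasible qs)
    (a b k : Fin 3) (hab : a ≠ b) (hak : a ≠ k) (hbk : b ≠ k)
    {X X' R : Code c} (hX : X ∈ qs) (hX' : X' ∈ qs) (hR : R ∈ qs) (hRX' : R ≠ X')
    (hXb : occ qs b (X b) = 1) (hXk : occ qs k (X k) = 1)
    (hX'a : occ qs a (X' a) = 1) (hX'k : occ qs k (X' k) = 1)
    (hRa : occ qs a (R a) = 1) (hRb : occ qs b (R b) = 1) :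
    (R a = X b ∨ R a = X' k ∨ X b = X' k) ∨
      (X' a = R b ∨ X' a = X k ∨ R b = X k) := by
  by_contra hcon
  push_neg at hcon
  obtain ⟨⟨h1, h2, h3⟩, h4, h5, h6⟩ := hcon
  have hS : Function.Injective (mk3 a b k (R a) (X b) (X' k)) :=
    mk3_inj a b k hab hak hbk _ _ _ h1 h2 h3
  have hS' : Function.Injective (mk3 a b k (X' a) (R b) (X k)) :=
    mk3_inj a b k hab hak hbk _ _ _ h4 h5 h6
  have heq : mk3 a b k (R a) (X b) (X' k) = mk3 a b k (X' a) (R b) (X k) := by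
    refine confuse hqs hS hS' (fun P hP => ?_)
    rw [answer3 a b k hab hak hbk, answer3 a b k hab hak hbk]
    rw [mk3_a, mk3_b a b k hab, mk3_k a b k hak hbk,
        mk3_a, mk3_b a b k hab, mk3_k a b k hak hbk]
    rw [ite_unique hRa hR hP, ite_unique hXb hX hP, ite_unique hX'k hX' hP,
        ite_unique hX'a hX' hP, ite_unique hRb hR hP, ite_unique hXk hX hP]
    by_cases e1 : P = X <;> by_cases e2 : P = X' <;> by_cases e3 : P = R <;>
      simp [e1, e2, e3] <;> ring
  have hp : R a = X' a := by
    have := congrFun heq a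
    rwa [mk3_a, mk3_a] at this
  exact hRX' (eq_of_occ1 hR hX' hX'a hp)

end Base

section Killers

variable {qs : List (Code c)}

lemma cycle3 (hqs : Feasible qs) (hc : 5 ≤ c)
    (p q r : Fin 3) (hpq : p ≠ q) (hpr : p ≠ r) (hqr : q ≠ r)
    {X1 X2 X3 : Code c} (h1 : X1 ∈ qs) (h2 : X2 ∈ qs) (h3 : X3 ∈ qs)
    (n12 : X1 ≠ X2) (n13 : X1 ≠ X3) (n23 : X2 ≠ X3)
    (q1 : occ qs q (X1 q) = 1) (q2 : occ qs q (X2 q) = 1) (q3 : occ qs q (X3 q) = 1)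
    (r1 : occ qs r (X1 r) = 1) (r2 : occ qs r (X2 r) = 1) (r3 : occ qs r (X3 r) = 1) :
    (X1 q = X2 r ∧ X2 q = X3 r ∧ X3 q = X1 r) ∨
      (X1 q = X3 r ∧ X3 q = X2 r ∧ X2 q = X1 r) := by
  have h12 := L_pair hqs hc p q r hpq hpr hqr h1 h2 n12 q1 r1 q2 r2
  have h13 := L_pair hqs hc p q r hpq hpr hqr h1 h3 n13 q1 r1 q3 r3
  have h23 := L_pair hqs hc p q r hpq hpr hqr h2 h3 n23 q2 r2 q3 r3
  rcases h12 with e12 | e21 <;> rcases h13 with e13 | e31 <;> rcases h23 with e23 | e32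
  · exact absurd (eq_of_occ1 h2 h3 r3 (e12.symm.trans e13)) n23
  · exact absurd (eq_of_occ1 h2 h3 r3 (e12.symm.trans e13)) n23
  · exact Or.inl ⟨e12, e23, e31⟩
  · exact absurd (eq_of_occ1 h1 h3 q3 (e12.trans e32.symm)) n13
  · exact absurd (eq_of_occ1 h1 h3 r3 (e21.symm.trans e23)) n13
  · exact Or.inr ⟨e13, e32, e21⟩
  · exact absurd (eq_of_occ1 h2 h3 q3 (e21.trans e31.symm)) n23
  · exact absurd (eq_of_occ1 h1 h2 r2 (e31.symm.trans e32)) n12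

lemma K1 (hqs : Feasible qs)
    (a b k : Fin 3) (hab : a ≠ b) (hak : a ≠ k) (hbk : b ≠ k)
    {ma mb : Fin c} (hma : ∀ P ∈ qs, P a ≠ ma) (hmb : ∀ P ∈ qs, P b ≠ mb)
    {Q1 Q2 Q3 : Code c} (hQ1 : Q1 ∈ qs) (hQ2 : Q2 ∈ qs) (hQ3 : Q3 ∈ qs)
    (n12 : Q1 ≠ Q2)
    (hH1 : 2 ≤ occ qs a (Q1 a)) (hH2 : 2 ≤ occ qs a (Q2 a)) (hH3 : 2 ≤ occ qs a (Q3 a))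
    (hb1 : occ qs b (Q1 b) = 1) (hb2 : occ qs b (Q2 b) = 1) (hb3 : occ qs b (Q3 b) = 1)
    (hk1 : occ qs k (Q1 k) = 1) (hk2 : occ qs k (Q2 k) = 1) (hk3 : occ qs k (Q3 k) = 1)
    (cy1 : Q1 b = Q2 k) (cy2 : Q2 b = Q3 k) (cy3 : Q3 b = Q1 k)
    {P1 P2 P3 : Code c} (hP1 : P1 ∈ qs) (hP2 : P2 ∈ qs) (hP3 : P3 ∈ qs)
    (m12 : P1 ≠ P2)
    (hI1 : 2 ≤ occ qs b (P1 b)) (hI2 : 2 ≤ occ qs b (P2 b)) (hI3 : 2 ≤ occ qs b (P3 b))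
    (ha1 : occ qs a (P1 a) = 1) (ha2 : occ qs a (P2 a) = 1) (ha3 : occ qs a (P3 a) = 1)
    (hw1 : occ qs k (P1 k) = 1) (hw2 : occ qs k (P2 k) = 1) (hw3 : occ qs k (P3 k) = 1)
    (od1 : P1 a = P2 k) (od2 : P2 a = P3 k) (od3 : P3 a = P1 k) : False := by
  have red : ∀ X Xp Xn Y Ys Ypre : Code c, X ∈ qs → Xp ∈ qs → Xn ∈ qs →
      Y ∈ qs → Ys ∈ qs → Ypre ∈ qs →
      occ qs b (X b) = 1 → occ qs k (X k) = 1 →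
      occ qs a (Y a) = 1 → occ qs k (Y k) = 1 →
      Xp b = X k → X b = Xn k → Y a = Ys k → Ypre a = Y k →
      Ys ≠ X → Xn ≠ Y →
      Y a = mb ∨ ma = X b := by
    intro X Xp Xn Y Ys Ypre hX hXp hXn hY hYs hYpre hXb hXk hYa hYk
      ecp ecn eod eodp hYsX hXnY
    have D := L_two hqs a b k hab hak hbk hma hmb hX hY hXb hXk hYa hYk
    rcases D with h | h | h | h | h | h
    · exact Or.inl h
    · exact absurd (eq_of_occ1 hYs hX hXk (eod.symm.trans h)) hYsX
    · exact absurd (ecp.trans h.symm) (hmb Xp hXp)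
    · exact Or.inr h
    · exact absurd (eodp.trans h.symm) (hma Ypre hYpre)
    · exact absurd (eq_of_occ1 hXn hY hYk (ecn.symm.trans h)) hXnY
  have D11 := red Q1 Q3 Q2 P1 P2 P3 hQ1 hQ3 hQ2 hP1 hP2 hP3 hb1 hk1 ha1 hw1
    cy3 cy1 od1 od3 (ne_of_heavy hI2 hb1) (ne_of_heavy hH2 ha1)
  have D12 := red Q1 Q3 Q2 P2 P3 P1 hQ1 hQ3 hQ2 hP2 hP3 hP1 hb1 hk1 ha2 hw2
    cy3 cy1 od2 od1 (ne_of_heavy hI3 hb1) (ne_of_heavy hH2 ha2)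
  have D21 := red Q2 Q1 Q3 P1 P2 P3 hQ2 hQ1 hQ3 hP1 hP2 hP3 hb2 hk2 ha1 hw1
    cy1 cy2 od1 od3 (ne_of_heavy hI2 hb2) (ne_of_heavy hH3 ha1)
  have D22 := red Q2 Q1 Q3 P2 P3 P1 hQ2 hQ1 hQ3 hP2 hP3 hP1 hb2 hk2 ha2 hw2
    cy1 cy2 od2 od1 (ne_of_heavy hI3 hb2) (ne_of_heavy hH3 ha2)
  rcases D11 with A1 | B1
  · rcases D22 with A2 | B2
    · exact absurd (eq_of_occ1 hP1 hP2 ha2 (A1.trans A2.symm)) m12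
    · rcases D12 with A2' | B1'
      · exact absurd (eq_of_occ1 hP1 hP2 ha2 (A1.trans A2'.symm)) m12
      · exact absurd (eq_of_occ1 hQ1 hQ2 hb2 (B1'.symm.trans B2)) n12
  · rcases D22 with A2 | B2
    · rcases D21 with A1' | B2'
      · exact absurd (eq_of_occ1 hP1 hP2 ha2 (A1'.trans A2.symm)) m12
      · exact absurd (eq_of_occ1 hQ1 hQ2 hb2 (B1.symm.trans B2')) n12
    · exact absurd (eq_of_occ1 hQ1 hQ2 hb2 (B1.symm.trans B2)) n12

lemma K2 (hqs : Feasible qs) (hc : 5 ≤ c)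
    (a b k : Fin 3) (hab : a ≠ b) (hak : a ≠ k) (hbk : b ≠ k)
    {ma mb : Fin c} (hma : ∀ P ∈ qs, P a ≠ ma) (hmb : ∀ P ∈ qs, P b ≠ mb)
    {Q1 Q2 Q3 : Code c} (hQ1 : Q1 ∈ qs) (hQ2 : Q2 ∈ qs) (hQ3 : Q3 ∈ qs)
    (n12 : Q1 ≠ Q2) (n13 : Q1 ≠ Q3) (n23 : Q2 ≠ Q3)
    (hH1 : 2 ≤ occ qs a (Q1 a)) (hH2 : 2 ≤ occ qs a (Q2 a)) (hH3 : 2 ≤ occ qs a (Q3 a))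
    (hb1 : occ qs b (Q1 b) = 1) (hb2 : occ qs b (Q2 b) = 1) (hb3 : occ qs b (Q3 b) = 1)
    (hk1 : occ qs k (Q1 k) = 1) (hk2 : occ qs k (Q2 k) = 1) (hk3 : occ qs k (Q3 k) = 1)
    (cy1 : Q1 b = Q2 k) (cy2 : Q2 b = Q3 k) (cy3 : Q3 b = Q1 k)
    {P1 P2 : Code c} (hP1 : P1 ∈ qs) (hP2 : P2 ∈ qs) (m12 : P1 ≠ P2)
    (hI1 : 2 ≤ occ qs b (P1 b)) (hI2 : 2 ≤ occ qs b (P2 b))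
    (ha1 : occ qs a (P1 a) = 1) (ha2 : occ qs a (P2 a) = 1)
    (hw1 : occ qs k (P1 k) = 1) (hw2 : occ qs k (P2 k) = 1)
    (od : P1 a = P2 k)
    {R : Code c} (hR : R ∈ qs)
    (hRa : occ qs a (R a) = 1) (hRb : occ qs b (R b) = 1) : False := by
  rcases L_single hqs hc a b k hab hak hbk hma hmb hR hRa hRb with hA | hB
  · -- Case I : R a = mb
    have red1 : ∀ X Xp Xn : Code c, X ∈ qs → Xp ∈ qs → Xn ∈ qs →
        occ qs b (X b) = 1 → occ qs k (X k) = 1 →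
        Xp b = X k → X b = Xn k → Xn ≠ P2 →
        P2 a = X k ∨ ma = X b := by
      intro X Xp Xn hX hXp hXn hXb hXk ecp ecn hXnP2
      have D := L_two hqs a b k hab hak hbk hma hmb hX hP2 hXb hXk ha2 hw2
      rcases D with h | h | h | h | h | h
      · exact absurd (eq_of_occ1 hP2 hR hRa (h.trans hA.symm)) (ne_of_heavy hI2 hRb)
      · exact Or.inl h
      · exact absurd (ecp.trans h.symm) (hmb Xp hXp)
      · exact Or.inr h
      · exact absurd (od.trans h.symm) (hma P1 hP1)
      · exact absurd (eq_of_occ1 hXn hP2 hw2 (ecn.symm.trans h)) hXnP2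
    have D1 := red1 Q1 Q3 Q2 hQ1 hQ3 hQ2 hb1 hk1 cy3 cy1 (ne_of_heavy hH2 ha2)
    have D2 := red1 Q2 Q1 Q3 hQ2 hQ1 hQ3 hb2 hk2 cy1 cy2 (ne_of_heavy hH3 ha2)
    have D3 := red1 Q3 Q2 Q1 hQ3 hQ2 hQ1 hb3 hk3 cy2 cy3 (ne_of_heavy hH1 ha2)
    rcases D1 with A1 | B1 <;> rcases D2 with A2 | B2 <;> rcases D3 with A3 | B3
    · exact absurd (eq_of_occ1 hQ1 hQ2 hk2 (A1.symm.trans A2)) n12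
    · exact absurd (eq_of_occ1 hQ1 hQ2 hk2 (A1.symm.trans A2)) n12
    · exact absurd (eq_of_occ1 hQ1 hQ3 hk3 (A1.symm.trans A3)) n13
    · exact absurd (eq_of_occ1 hQ2 hQ3 hb3 (B2.symm.trans B3)) n23
    · exact absurd (eq_of_occ1 hQ2 hQ3 hk3 (A2.symm.trans A3)) n23
    · exact absurd (eq_of_occ1 hQ1 hQ3 hb3 (B1.symm.trans B3)) n13
    · exact absurd (eq_of_occ1 hQ1 hQ2 hb2 (B1.symm.trans B2)) n12
    · exact absurd (eq_of_occ1 hQ1 hQ2 hb2 (B1.symm.trans B2)) n12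
  · -- Case II : R b = ma
    have red2 : ∀ X Xp Xn : Code c, X ∈ qs → Xp ∈ qs → Xn ∈ qs →
        2 ≤ occ qs a (X a) →
        occ qs b (X b) = 1 → occ qs k (X k) = 1 →
        Xp b = X k → X b = Xn k → Xn ≠ P2 →
        P2 a = mb ∨ P2 a = X k := by
      intro X Xp Xn hX hXp hXn hHX hXb hXk ecp ecn hXnP2
      have D := L_two hqs a b k hab hak hbk hma hmb hX hP2 hXb hXk ha2 hw2
      rcases D with h | h | h | h | h | h
      · exact Or.inl h
      · exact Or.inr h
      · exact absurd (ecp.trans h.symm) (hmb Xp hXp)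
      · exact absurd (eq_of_occ1 hX hR hRb (h.symm.trans hB.symm)) (ne_of_heavy hHX hRa)
      · exact absurd (od.trans h.symm) (hma P1 hP1)
      · exact absurd (eq_of_occ1 hXn hP2 hw2 (ecn.symm.trans h)) hXnP2
    have D1 := red2 Q1 Q3 Q2 hQ1 hQ3 hQ2 hH1 hb1 hk1 cy3 cy1 (ne_of_heavy hH2 ha2)
    have D2 := red2 Q2 Q1 Q3 hQ2 hQ1 hQ3 hH2 hb2 hk2 cy1 cy2 (ne_of_heavy hH3 ha2)
    have hs2 : P2 a = mb := by
      rcases D1 with h | h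
      · exact h
      · rcases D2 with h' | h'
        · exact h'
        · exact absurd (eq_of_occ1 hQ1 hQ2 hk2 (h.symm.trans h')) n12
    have hw : ma = P1 k := by
      have D := L_two hqs a b k hab hak hbk hma hmb hQ1 hP1 hb1 hk1 ha1 hw1
      rcases D with h | h | h | h | h | h
      · exact absurd (eq_of_occ1 hP1 hP2 ha2 (h.trans hs2.symm)) m12
      · exact absurd (eq_of_occ1 hP2 hQ1 hk1 (od.symm.trans h)) (Ne.symm (ne_of_heavy hH1 ha2))
      · exact absurd (cy3.trans h.symm) (hmb Q3 hQ3)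
      · exact absurd (eq_of_occ1 hQ1 hR hRb (h.symm.trans hB.symm)) (ne_of_heavy hH1 hRa)
      · exact h
      · exact absurd (eq_of_occ1 hQ2 hP1 hw1 (cy1.symm.trans h)) (ne_of_heavy hH2 ha1)
    have red3 : ∀ X Xp Xn : Code c, X ∈ qs → Xp ∈ qs → Xn ∈ qs →
        2 ≤ occ qs a (X a) →
        occ qs b (X b) = 1 → occ qs k (X k) = 1 →
        Xp b = X k → X b = Xn k → Xn ≠ P1 →
        R a = X b ∨ R b = X k := by
      intro X Xp Xn hX hXp hXn hHX hXb hXk ecp ecn hXnP1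
      have E := L_three hqs a b k hab hak hbk hX hP1 hR
        (Ne.symm (ne_of_heavy hI1 hRb)) hXb hXk ha1 hw1 hRa hRb
      rcases E with (h | h | h) | (h | h | h)
      · exact Or.inl h
      · exact absurd (h.trans hw.symm) (hma R hR)
      · exact absurd (eq_of_occ1 hXn hP1 hw1 (ecn.symm.trans h)) hXnP1
      · exact absurd (h.trans hB) (hma P1 hP1)
      · exact absurd (eq_of_occ1 hP2 hX hXk (od.symm.trans h)) (Ne.symm (ne_of_heavy hHX ha2))
      · exact Or.inr h
    have E1 := red3 Q1 Q3 Q2 hQ1 hQ3 hQ2 hH1 hb1 hk1 cy3 cy1 (ne_of_heavy hH2 ha1)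
    have E2 := red3 Q2 Q1 Q3 hQ2 hQ1 hQ3 hH2 hb2 hk2 cy1 cy2 (ne_of_heavy hH3 ha1)
    have E3 := red3 Q3 Q2 Q1 hQ3 hQ2 hQ1 hH3 hb3 hk3 cy2 cy3 (ne_of_heavy hH1 ha1)
    rcases E1 with A1 | B1 <;> rcases E2 with A2 | B2 <;> rcases E3 with A3 | B3
    · exact absurd (eq_of_occ1 hQ1 hQ2 hb2 (A1.symm.trans A2)) n12
    · exact absurd (eq_of_occ1 hQ1 hQ2 hb2 (A1.symm.trans A2)) n12
    · exact absurd (eq_of_occ1 hQ1 hQ3 hb3 (A1.symm.trans A3)) n13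
    · exact absurd (eq_of_occ1 hQ2 hQ3 hk3 (B2.symm.trans B3)) n23
    · exact absurd (eq_of_occ1 hQ2 hQ3 hb3 (A2.symm.trans A3)) n23
    · exact absurd (eq_of_occ1 hQ1 hQ3 hk3 (B1.symm.trans B3)) n13
    · exact absurd (eq_of_occ1 hQ1 hQ2 hk2 (B1.symm.trans B2)) n12
    · exact absurd (eq_of_occ1 hQ1 hQ2 hk2 (B1.symm.trans B2)) n12

lemma K3 (hqs : Feasible qs) (hc : 5 ≤ c)
    (a b k : Fin 3) (hab : a ≠ b) (hak : a ≠ k) (hbk : b ≠ k)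
    {ma mb : Fin c} (hma : ∀ P ∈ qs, P a ≠ ma) (hmb : ∀ P ∈ qs, P b ≠ mb)
    {Q1 Q2 Q3 : Code c} (hQ1 : Q1 ∈ qs) (hQ2 : Q2 ∈ qs) (hQ3 : Q3 ∈ qs)
    (n12 : Q1 ≠ Q2) (n13 : Q1 ≠ Q3) (n23 : Q2 ≠ Q3)
    (hH1 : 2 ≤ occ qs a (Q1 a)) (hH2 : 2 ≤ occ qs a (Q2 a)) (hH3 : 2 ≤ occ qs a (Q3 a))
    (hb1 : occ qs b (Q1 b) = 1) (hb2 : occ qs b (Q2 b) = 1) (hb3 : occ qs b (Q3 b) = 1)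
    (hk1 : occ qs k (Q1 k) = 1) (hk2 : occ qs k (Q2 k) = 1) (hk3 : occ qs k (Q3 k) = 1)
    (cy1 : Q1 b = Q2 k) (cy2 : Q2 b = Q3 k) (cy3 : Q3 b = Q1 k)
    {P : Code c} (hP : P ∈ qs) (hIP : 2 ≤ occ qs b (P b))
    (haP : occ qs a (P a) = 1) (hwP : occ qs k (P k) = 1)
    {R Rt : Code c} (hR : R ∈ qs) (hRt : Rt ∈ qs) (hRRt : R ≠ Rt)
    (hRa : occ qs a (R a) = 1) (hRb : occ qs b (R b) = 1)
    (hRta : occ qs a (Rt a) = 1) (hRtb : occ qs b (Rt b) = 1)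
    (hA : R a = mb) (hBt : Rt b = ma) : False := by
  have step4 : ma = P k := by
    by_contra hg
    have red : ∀ X Xp Xn : Code c, X ∈ qs → Xp ∈ qs → Xn ∈ qs →
        occ qs b (X b) = 1 → occ qs k (X k) = 1 →
        Xp b = X k → X b = Xn k → Xn ≠ P →
        P a = X k ∨ ma = X b := by
      intro X Xp Xn hX hXp hXn hXb hXk ecp ecn hXnP
      have D := L_two hqs a b k hab hak hbk hma hmb hX hP hXb hXk haP hwP
      rcases D with h | h | h | h | h | h
      · exact absurd (eq_of_occ1 hP hR hRa (h.trans hA.symm)) (ne_of_heavy hIP hRb)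
      · exact Or.inl h
      · exact absurd (ecp.trans h.symm) (hmb Xp hXp)
      · exact Or.inr h
      · exact absurd h hg
      · exact absurd (eq_of_occ1 hXn hP hwP (ecn.symm.trans h)) hXnP
    have D1 := red Q1 Q3 Q2 hQ1 hQ3 hQ2 hb1 hk1 cy3 cy1 (ne_of_heavy hH2 haP)
    have D2 := red Q2 Q1 Q3 hQ2 hQ1 hQ3 hb2 hk2 cy1 cy2 (ne_of_heavy hH3 haP)
    have D3 := red Q3 Q2 Q1 hQ3 hQ2 hQ1 hb3 hk3 cy2 cy3 (ne_of_heavy hH1 haP)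
    rcases D1 with A1 | B1 <;> rcases D2 with A2 | B2 <;> rcases D3 with A3 | B3
    · exact absurd (eq_of_occ1 hQ1 hQ2 hk2 (A1.symm.trans A2)) n12
    · exact absurd (eq_of_occ1 hQ1 hQ2 hk2 (A1.symm.trans A2)) n12
    · exact absurd (eq_of_occ1 hQ1 hQ3 hk3 (A1.symm.trans A3)) n13
    · exact absurd (eq_of_occ1 hQ2 hQ3 hb3 (B2.symm.trans B3)) n23
    · exact absurd (eq_of_occ1 hQ2 hQ3 hk3 (A2.symm.trans A3)) n23
    · exact absurd (eq_of_occ1 hQ1 hQ3 hb3 (B1.symm.trans B3)) n13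
    · exact absurd (eq_of_occ1 hQ1 hQ2 hb2 (B1.symm.trans B2)) n12
    · exact absurd (eq_of_occ1 hQ1 hQ2 hb2 (B1.symm.trans B2)) n12
  have step5 : P a = R b := by
    by_contra hg
    have red : ∀ X Xp Xn : Code c, X ∈ qs → Xp ∈ qs → Xn ∈ qs →
        2 ≤ occ qs a (X a) →
        occ qs b (X b) = 1 → occ qs k (X k) = 1 →
        X b = Xn k → Xn ≠ P →
        P a = X k ∨ R b = X k := by
      intro X Xp Xn hX hXp hXn hHX hXb hXk ecn hXnP
      have E := L_three hqs a b k hab hak hbk hX hP hR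
        (Ne.symm (ne_of_heavy hIP hRb)) hXb hXk haP hwP hRa hRb
      rcases E with (h | h | h) | (h | h | h)
      · exact absurd (hA.symm.trans h).symm (hmb X hX)
      · exact absurd (h.trans step4.symm) (hma R hR)
      · exact absurd (eq_of_occ1 hXn hP hwP (ecn.symm.trans h)) hXnP
      · exact absurd h hg
      · exact Or.inl h
      · exact Or.inr h
    have D1 := red Q1 Q3 Q2 hQ1 hQ3 hQ2 hH1 hb1 hk1 cy1 (ne_of_heavy hH2 haP)
    have D2 := red Q2 Q1 Q3 hQ2 hQ1 hQ3 hH2 hb2 hk2 cy2 (ne_of_heavy hH3 haP)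
    have D3 := red Q3 Q2 Q1 hQ3 hQ2 hQ1 hH3 hb3 hk3 cy3 (ne_of_heavy hH1 haP)
    rcases D1 with A1 | B1 <;> rcases D2 with A2 | B2 <;> rcases D3 with A3 | B3
    · exact absurd (eq_of_occ1 hQ1 hQ2 hk2 (A1.symm.trans A2)) n12
    · exact absurd (eq_of_occ1 hQ1 hQ2 hk2 (A1.symm.trans A2)) n12
    · exact absurd (eq_of_occ1 hQ1 hQ3 hk3 (A1.symm.trans A3)) n13
    · exact absurd (eq_of_occ1 hQ2 hQ3 hk3 (B2.symm.trans B3)) n23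
    · exact absurd (eq_of_occ1 hQ2 hQ3 hk3 (A2.symm.trans A3)) n23
    · exact absurd (eq_of_occ1 hQ1 hQ3 hk3 (B1.symm.trans B3)) n13
    · exact absurd (eq_of_occ1 hQ1 hQ2 hk2 (B1.symm.trans B2)) n12
    · exact absurd (eq_of_occ1 hQ1 hQ2 hk2 (B1.symm.trans B2)) n12
  have hsig : Rt a = R b := by
    rcases L_pair hqs hc k a b (Ne.symm hak) (Ne.symm hbk) hab hR hRt hRRt
        hRa hRb hRta hRtb with h | h
    · exact absurd (hA.symm.trans h).symm (hmb Rt hRt)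
    · exact h
  exact absurd (eq_of_occ1 hP hRt hRta (step5.trans hsig.symm)) (ne_of_heavy hIP hRtb)

lemma K4 (hqs : Feasible qs) (hc : 5 ≤ c)
    (a b k : Fin 3) (hab : a ≠ b) (hak : a ≠ k) (hbk : b ≠ k)
    {ma mb : Fin c} (hma : ∀ P ∈ qs, P a ≠ ma) (hmb : ∀ P ∈ qs, P b ≠ mb)
    {Q1 Q2 : Code c} (hQ1 : Q1 ∈ qs) (hQ2 : Q2 ∈ qs)
    (hH1 : 2 ≤ occ qs a (Q1 a)) (hH2 : 2 ≤ occ qs a (Q2 a))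
    (hb1 : occ qs b (Q1 b) = 1) (hk1 : occ qs k (Q1 k) = 1)
    (edge : Q1 b = Q2 k)
    {P1 P2 : Code c} (hP1 : P1 ∈ qs) (hP2 : P2 ∈ qs)
    (hI1 : 2 ≤ occ qs b (P1 b)) (hI2 : 2 ≤ occ qs b (P2 b))
    (ha1 : occ qs a (P1 a) = 1) (ha2 : occ qs a (P2 a) = 1)
    (hw1 : occ qs k (P1 k) = 1)
    (od : P1 a = P2 k)
    {R Rt : Code c} (hR : R ∈ qs) (hRt : Rt ∈ qs) (hRRt : R ≠ Rt)
    (hRa' : occ qs a (R a) = 1) (hRb' : occ qs b (R b) = 1)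
    (hRta' : occ qs a (Rt a) = 1) (hRtb' : occ qs b (Rt b) = 1)
    (hA : R a = mb) (hBt : Rt b = ma) : False := by
  have hsig : Rt a = R b := by
    rcases L_pair hqs hc k a b (Ne.symm hak) (Ne.symm hbk) hab hR hRt hRRt
        hRa' hRb' hRta' hRtb' with h | h
    · exact absurd (hA.symm.trans h).symm (hmb Rt hRt)
    · exact h
  have E := L_three hqs a b k hab hak hbk hQ1 hP1 hRt
    (Ne.symm (ne_of_heavy hI1 hRtb')) hb1 hk1 ha1 hw1 hRta' hRtb'
  have hcase : Rt a = P1 k ∨ Rt b = Q1 k := by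
    rcases E with (h | h | h) | (h | h | h)
    · exact absurd (eq_of_occ1 hQ1 hR hRb' (hsig.symm.trans h).symm)
        (ne_of_heavy hH1 hRa')
    · exact Or.inl h
    · exact absurd (eq_of_occ1 hQ2 hP1 hw1 (edge.symm.trans h)) (ne_of_heavy hH2 ha1)
    · exact absurd (h.trans hBt) (hma P1 hP1)
    · exact absurd (eq_of_occ1 hP2 hQ1 hk1 (od.symm.trans h))
        (Ne.symm (ne_of_heavy hH1 ha2))
    · exact Or.inr h
  have F := L_three hqs a b k hab hak hbk hQ1 hP1 hR
    (Ne.symm (ne_of_heavy hI1 hRb')) hb1 hk1 ha1 hw1 hRa' hRb'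
  have F' : R a = P1 k ∨ R b = Q1 k := by
    rcases F with (h | h | h) | (h | h | h)
    · exact absurd (hA.symm.trans h).symm (hmb Q1 hQ1)
    · exact Or.inl h
    · exact absurd (eq_of_occ1 hQ2 hP1 hw1 (edge.symm.trans h)) (ne_of_heavy hH2 ha1)
    · exact absurd (eq_of_occ1 hP1 hRt hRta' (h.trans hsig.symm)) (ne_of_heavy hI1 hRtb')
    · exact absurd (eq_of_occ1 hP2 hQ1 hk1 (od.symm.trans h))
        (Ne.symm (ne_of_heavy hH1 ha2))
    · exact Or.inr h
  rcases hcase with h1 | h1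
  · rcases F' with h2 | h2
    · exact hRRt (eq_of_occ1 hR hRt hRta' (h2.trans h1.symm))
    · exact absurd (eq_of_occ1 hP1 hQ1 hk1 (h1.symm.trans (hsig.trans h2)))
        (Ne.symm (ne_of_heavy hH1 ha1))
  · rcases F' with h2 | h2
    · have G := L_two hqs a b k hab hak hbk hma hmb hQ1 hP1 hb1 hk1 ha1 hw1
      rcases G with h | h | h | h | h | h
      · exact absurd (eq_of_occ1 hP1 hR hRa' (h.trans hA.symm)) (ne_of_heavy hI1 hRb')
      · exact absurd (eq_of_occ1 hP2 hQ1 hk1 (od.symm.trans h))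
          (Ne.symm (ne_of_heavy hH1 ha2))
      · exact hmb Rt hRt (h1.trans h.symm)
      · exact absurd (eq_of_occ1 hQ1 hRt hRtb' (h.symm.trans hBt.symm))
          (ne_of_heavy hH1 hRta')
      · exact hma R hR (h2.trans h.symm)
      · exact absurd (eq_of_occ1 hQ2 hP1 hw1 (edge.symm.trans h)) (ne_of_heavy hH2 ha1)
    · exact hRRt (eq_of_occ1 hR hRt hRtb' (h2.trans h1.symm))

end Killers

section Core

def Pp (qs : List (Code c)) (h : Fin 3) (Q : Code c) : Prop :=
  2 ≤ occ qs h (Q h) ∧ ∀ i, i ≠ h → occ qs i (Q i) = 1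

instance (qs : List (Code c)) (h : Fin 3) : DecidablePred (Pp qs h) := fun Q => by
  unfold Pp; infer_instance

lemma ex2F {α : Type*} [DecidableEq α] {s : Finset α} (h : 2 ≤ s.card) :
    ∃ x y, x ∈ s ∧ y ∈ s ∧ x ≠ y := by
  obtain ⟨x, hx⟩ := (Finset.card_pos (s := s)).mp (by omega)
  have h2 : 1 ≤ (s.erase x).card := by rw [Finset.card_erase_of_mem hx]; omega
  obtain ⟨y, hy⟩ := (Finset.card_pos (s := s.erase x)).mp (by omega)
  exact ⟨x, y, hx, (Finset.mem_erase.mp hy).2, fun e => (Finset.mem_erase.mp hy).1 e.symm⟩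

lemma ex3F {α : Type*} [DecidableEq α] {s : Finset α} (h : 3 ≤ s.card) :
    ∃ x y z, x ∈ s ∧ y ∈ s ∧ z ∈ s ∧ x ≠ y ∧ x ≠ z ∧ y ≠ z := by
  obtain ⟨x, hx⟩ := (Finset.card_pos (s := s)).mp (by omega)
  have h2 : 2 ≤ (s.erase x).card := by rw [Finset.card_erase_of_mem hx]; omega
  obtain ⟨y, z, hy, hz, hyz⟩ := ex2F h2
  exact ⟨x, y, z, hx, (Finset.mem_erase.mp hy).2, (Finset.mem_erase.mp hz).2,
    fun e => (Finset.mem_erase.mp hy).1 e.symm, fun e => (Finset.mem_erase.mp hz).1 e.symm, hyz⟩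

lemma ex4F {α : Type*} [DecidableEq α] {s : Finset α} (h : 4 ≤ s.card) :
    ∃ w x y z, w ∈ s ∧ x ∈ s ∧ y ∈ s ∧ z ∈ s ∧
      w ≠ x ∧ w ≠ y ∧ w ≠ z ∧ x ≠ y ∧ x ≠ z ∧ y ≠ z := by
  obtain ⟨w, hw⟩ := (Finset.card_pos (s := s)).mp (by omega)
  have h2 : 3 ≤ (s.erase w).card := by rw [Finset.card_erase_of_mem hw]; omega
  obtain ⟨x, y, z, hx, hy, hz, nxy, nxz, nyz⟩ := ex3F h2
  exact ⟨w, x, y, z, hw, (Finset.mem_erase.mp hx).2, (Finset.mem_erase.mp hy).2,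
    (Finset.mem_erase.mp hz).2,
    fun e => (Finset.mem_erase.mp hx).1 e.symm, fun e => (Finset.mem_erase.mp hy).1 e.symm,
    fun e => (Finset.mem_erase.mp hz).1 e.symm, nxy, nxz, nyz⟩

lemma core {qs : List (Code c)} (hqs : Feasible qs) (hc : 5 ≤ c)
    (a b k : Fin 3) (hab : a ≠ b) (hak : a ≠ k) (hbk : b ≠ k)
    {ma mb : Fin c} (hma : ∀ P ∈ qs, P a ≠ ma) (hmb : ∀ P ∈ qs, P b ≠ mb) :
    qs.countP (fun Q => decide (Pp qs a Q)) + qs.countP (fun Q => decide (Pp qs b Q)) +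
      qs.countP (fun Q => decide (Pp qs k Q)) ≤ 5 := by
  by_contra hcon
  push_neg at hcon
  set A : Finset (Code c) := (qs.filter (fun Q => decide (Pp qs a Q))).toFinset with hA
  set B : Finset (Code c) := (qs.filter (fun Q => decide (Pp qs b Q))).toFinset with hB
  set K : Finset (Code c) := (qs.filter (fun Q => decide (Pp qs k Q))).toFinset with hK
  have cardA : A.card = qs.countP (fun Q => decide (Pp qs a Q)) := by
    rw [hA, List.toFinset_card_of_nodup (hqs.1.filter _), List.countP_eq_length_filter]
  have cardB : B.card = qs.countP (fun Q => decide (Pp qs b Q)) := by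
    rw [hB, List.toFinset_card_of_nodup (hqs.1.filter _), List.countP_eq_length_filter]
  have cardK : K.card = qs.countP (fun Q => decide (Pp qs k Q)) := by
    rw [hK, List.toFinset_card_of_nodup (hqs.1.filter _), List.countP_eq_length_filter]
  have getA : ∀ Q ∈ A, Q ∈ qs ∧ 2 ≤ occ qs a (Q a) ∧ occ qs b (Q b) = 1 ∧
      occ qs k (Q k) = 1 := by
    intro Q hQ
    rw [hA, List.mem_toFinset, List.mem_filter] at hQ
    have hp := of_decide_eq_true hQ.2
    exact ⟨hQ.1, hp.1, hp.2 b (Ne.symm hab), hp.2 k (Ne.symm hak)⟩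
  have getB : ∀ Q ∈ B, Q ∈ qs ∧ 2 ≤ occ qs b (Q b) ∧ occ qs a (Q a) = 1 ∧
      occ qs k (Q k) = 1 := by
    intro Q hQ
    rw [hB, List.mem_toFinset, List.mem_filter] at hQ
    have hp := of_decide_eq_true hQ.2
    exact ⟨hQ.1, hp.1, hp.2 a hab, hp.2 k (Ne.symm hbk)⟩
  have getK : ∀ Q ∈ K, Q ∈ qs ∧ 2 ≤ occ qs k (Q k) ∧ occ qs a (Q a) = 1 ∧
      occ qs b (Q b) = 1 := by
    intro Q hQ
    rw [hK, List.mem_toFinset, List.mem_filter] at hQ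
    have hp := of_decide_eq_true hQ.2
    exact ⟨hQ.1, hp.1, hp.2 a hak, hp.2 b hbk⟩
  have hK2 : K.card ≤ 2 := by
    by_contra hg
    obtain ⟨x, y, z, hx, hy, hz, nxy, nxz, nyz⟩ := ex3F (s := K) (by omega)
    obtain ⟨xq, _, xa, xb⟩ := getK x hx
    obtain ⟨yq, _, ya, yb⟩ := getK y hy
    obtain ⟨zq, _, za, zb⟩ := getK z hz
    have c1 := L_single hqs hc a b k hab hak hbk hma hmb xq xa xb
    have c2 := L_single hqs hc a b k hab hak hbk hma hmb yq ya yb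
    have c3 := L_single hqs hc a b k hab hak hbk hma hmb zq za zb
    rcases c1 with h1 | h1 <;> rcases c2 with h2 | h2 <;> rcases c3 with h3 | h3
    · exact absurd (eq_of_occ1 xq yq ya (h1.trans h2.symm)) nxy
    · exact absurd (eq_of_occ1 xq yq ya (h1.trans h2.symm)) nxy
    · exact absurd (eq_of_occ1 xq zq za (h1.trans h3.symm)) nxz
    · exact absurd (eq_of_occ1 yq zq zb (h2.trans h3.symm)) nyz
    · exact absurd (eq_of_occ1 yq zq za (h2.trans h3.symm)) nyz
    · exact absurd (eq_of_occ1 xq zq zb (h1.trans h3.symm)) nxz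
    · exact absurd (eq_of_occ1 xq yq yb (h1.trans h2.symm)) nxy
    · exact absurd (eq_of_occ1 xq yq yb (h1.trans h2.symm)) nxy
  have hA3 : A.card ≤ 3 := by
    by_contra hg
    obtain ⟨w, x, y, z, hw, hx, hy, hz, nwx, nwy, nwz, nxy, nxz, nyz⟩ :=
      ex4F (s := A) (by omega)
    obtain ⟨wq, _, wb, wk⟩ := getA w hw
    obtain ⟨xq, _, xb, xk⟩ := getA x hx
    obtain ⟨yq, _, yb, yk⟩ := getA y hy
    obtain ⟨zq, _, zb, zk⟩ := getA z hz
    have cyc := cycle3 hqs hc a b k hab hak hbk wq xq yq nwx nwy nxy wb xb yb wk xk yk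
    have pz := L_pair hqs hc a b k hab hak hbk wq zq nwz wb wk zb zk
    rcases cyc with ⟨c1, c2, c3⟩ | ⟨c1, c2, c3⟩
    · rcases pz with e | e
      · exact absurd (eq_of_occ1 zq xq xk (e.symm.trans c1)) nxz.symm
      · exact absurd (eq_of_occ1 zq yq yb (e.trans c3.symm)) nyz.symm
    · rcases pz with e | e
      · exact absurd (eq_of_occ1 zq yq yk (e.symm.trans c1)) nyz.symm
      · exact absurd (eq_of_occ1 zq xq xb (e.trans c3.symm)) nxz.symm
  have hB3 : B.card ≤ 3 := by
    by_contra hg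
    obtain ⟨w, x, y, z, hw, hx, hy, hz, nwx, nwy, nwz, nxy, nxz, nyz⟩ :=
      ex4F (s := B) (by omega)
    obtain ⟨wq, _, wa, wk⟩ := getB w hw
    obtain ⟨xq, _, xa, xk⟩ := getB x hx
    obtain ⟨yq, _, ya, yk⟩ := getB y hy
    obtain ⟨zq, _, za, zk⟩ := getB z hz
    have cyc := cycle3 hqs hc b a k (Ne.symm hab) hbk hak wq xq yq nwx nwy nxy wa xa ya wk xk yk
    have pz := L_pair hqs hc b a k (Ne.symm hab) hbk hak wq zq nwz wa wk za zk
    rcases cyc with ⟨c1, c2, c3⟩ | ⟨c1, c2, c3⟩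
    · rcases pz with e | e
      · exact absurd (eq_of_occ1 zq xq xk (e.symm.trans c1)) nxz.symm
      · exact absurd (eq_of_occ1 zq yq ya (e.trans c3.symm)) nyz.symm
    · rcases pz with e | e
      · exact absurd (eq_of_occ1 zq yq yk (e.symm.trans c1)) nyz.symm
      · exact absurd (eq_of_occ1 zq xq xa (e.trans c3.symm)) nxz.symm
  rw [← cardA, ← cardB, ← cardK] at hcon
  have hdis : (3 ≤ A.card ∧ 3 ≤ B.card) ∨ (3 ≤ A.card ∧ 2 ≤ B.card ∧ 1 ≤ K.card) ∨
      (2 ≤ A.card ∧ 3 ≤ B.card ∧ 1 ≤ K.card) ∨ (3 ≤ A.card ∧ 1 ≤ B.card ∧ 2 ≤ K.card) ∨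
      (1 ≤ A.card ∧ 3 ≤ B.card ∧ 2 ≤ K.card) ∨
      (2 ≤ A.card ∧ 2 ≤ B.card ∧ 2 ≤ K.card) := by omega
  rcases hdis with ⟨h3a, h3b⟩ | ⟨h3a, h2b, h1k⟩ | ⟨h2a, h3b, h1k⟩ | ⟨h3a, h1b, h2k⟩ |
    ⟨h1a, h3b, h2k⟩ | ⟨h2a, h2b, h2k⟩
  · -- (3,3)
    obtain ⟨x1, x2, x3, hx1, hx2, hx3, a12, a13, a23⟩ := ex3F h3a
    obtain ⟨y1, y2, y3, hy1, hy2, hy3, b12, b13, b23⟩ := ex3F h3b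
    obtain ⟨xq1, xH1, xb1, xk1⟩ := getA x1 hx1
    obtain ⟨xq2, xH2, xb2, xk2⟩ := getA x2 hx2
    obtain ⟨xq3, xH3, xb3, xk3⟩ := getA x3 hx3
    obtain ⟨yq1, yH1, ya1, yk1⟩ := getB y1 hy1
    obtain ⟨yq2, yH2, ya2, yk2⟩ := getB y2 hy2
    obtain ⟨yq3, yH3, ya3, yk3⟩ := getB y3 hy3
    have cycA := cycle3 hqs hc a b k hab hak hbk xq1 xq2 xq3 a12 a13 a23 xb1 xb2 xb3 xk1 xk2 xk3
    have cycB := cycle3 hqs hc b a k (Ne.symm hab) hbk hak yq1 yq2 yq3 b12 b13 b23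
      ya1 ya2 ya3 yk1 yk2 yk3
    rcases cycA with ⟨c1, c2, c3⟩ | ⟨c1, c2, c3⟩ <;>
      rcases cycB with ⟨d1, d2, d3⟩ | ⟨d1, d2, d3⟩
    · exact K1 hqs a b k hab hak hbk hma hmb xq1 xq2 xq3 a12 xH1 xH2 xH3 xb1 xb2 xb3
        xk1 xk2 xk3 c1 c2 c3 yq1 yq2 yq3 b12 yH1 yH2 yH3 ya1 ya2 ya3 yk1 yk2 yk3 d1 d2 d3
    · exact K1 hqs a b k hab hak hbk hma hmb xq1 xq2 xq3 a12 xH1 xH2 xH3 xb1 xb2 xb3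
        xk1 xk2 xk3 c1 c2 c3 yq1 yq3 yq2 b13 yH1 yH3 yH2 ya1 ya3 ya2 yk1 yk3 yk2 d1 d2 d3
    · exact K1 hqs a b k hab hak hbk hma hmb xq1 xq3 xq2 a13 xH1 xH3 xH2 xb1 xb3 xb2
        xk1 xk3 xk2 c1 c2 c3 yq1 yq2 yq3 b12 yH1 yH2 yH3 ya1 ya2 ya3 yk1 yk2 yk3 d1 d2 d3
    · exact K1 hqs a b k hab hak hbk hma hmb xq1 xq3 xq2 a13 xH1 xH3 xH2 xb1 xb3 xb2
        xk1 xk3 xk2 c1 c2 c3 yq1 yq3 yq2 b13 yH1 yH3 yH2 ya1 ya3 ya2 yk1 yk3 yk2 d1 d2 d3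
  · -- (3,2,1)
    obtain ⟨x1, x2, x3, hx1, hx2, hx3, a12, a13, a23⟩ := ex3F h3a
    obtain ⟨y1, y2, hy1, hy2, b12⟩ := ex2F h2b
    obtain ⟨R, hRK⟩ := (Finset.card_pos (s := K)).mp (by omega)
    obtain ⟨xq1, xH1, xb1, xk1⟩ := getA x1 hx1
    obtain ⟨xq2, xH2, xb2, xk2⟩ := getA x2 hx2
    obtain ⟨xq3, xH3, xb3, xk3⟩ := getA x3 hx3
    obtain ⟨yq1, yH1, ya1, yk1⟩ := getB y1 hy1
    obtain ⟨yq2, yH2, ya2, yk2⟩ := getB y2 hy2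
    obtain ⟨Rq, _, Ra, Rb⟩ := getK R hRK
    have cycA := cycle3 hqs hc a b k hab hak hbk xq1 xq2 xq3 a12 a13 a23 xb1 xb2 xb3 xk1 xk2 xk3
    have pB := L_pair hqs hc b a k (Ne.symm hab) hbk hak yq1 yq2 b12 ya1 yk1 ya2 yk2
    rcases cycA with ⟨c1, c2, c3⟩ | ⟨c1, c2, c3⟩ <;> rcases pB with od | od
    · exact K2 hqs hc a b k hab hak hbk hma hmb xq1 xq2 xq3 a12 a13 a23 xH1 xH2 xH3
        xb1 xb2 xb3 xk1 xk2 xk3 c1 c2 c3 yq1 yq2 b12 yH1 yH2 ya1 ya2 yk1 yk2 od Rq Ra Rb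
    · exact K2 hqs hc a b k hab hak hbk hma hmb xq1 xq2 xq3 a12 a13 a23 xH1 xH2 xH3
        xb1 xb2 xb3 xk1 xk2 xk3 c1 c2 c3 yq2 yq1 (Ne.symm b12) yH2 yH1 ya2 ya1 yk2 yk1 od Rq Ra Rb
    · exact K2 hqs hc a b k hab hak hbk hma hmb xq1 xq3 xq2 a13 a12 (Ne.symm a23) xH1 xH3 xH2
        xb1 xb3 xb2 xk1 xk3 xk2 c1 c2 c3 yq1 yq2 b12 yH1 yH2 ya1 ya2 yk1 yk2 od Rq Ra Rb
    · exact K2 hqs hc a b k hab hak hbk hma hmb xq1 xq3 xq2 a13 a12 (Ne.symm a23) xH1 xH3 xH2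
        xb1 xb3 xb2 xk1 xk3 xk2 c1 c2 c3 yq2 yq1 (Ne.symm b12) yH2 yH1 ya2 ya1 yk2 yk1 od Rq Ra Rb
  · -- (2,3,1)
    obtain ⟨y1, y2, y3, hy1, hy2, hy3, b12, b13, b23⟩ := ex3F h3b
    obtain ⟨x1, x2, hx1, hx2, a12⟩ := ex2F h2a
    obtain ⟨R, hRK⟩ := (Finset.card_pos (s := K)).mp (by omega)
    obtain ⟨yq1, yH1, ya1, yk1⟩ := getB y1 hy1
    obtain ⟨yq2, yH2, ya2, yk2⟩ := getB y2 hy2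
    obtain ⟨yq3, yH3, ya3, yk3⟩ := getB y3 hy3
    obtain ⟨xq1, xH1, xb1, xk1⟩ := getA x1 hx1
    obtain ⟨xq2, xH2, xb2, xk2⟩ := getA x2 hx2
    obtain ⟨Rq, _, Ra, Rb⟩ := getK R hRK
    have cycB := cycle3 hqs hc b a k (Ne.symm hab) hbk hak yq1 yq2 yq3 b12 b13 b23
      ya1 ya2 ya3 yk1 yk2 yk3
    have pA := L_pair hqs hc a b k hab hak hbk xq1 xq2 a12 xb1 xk1 xb2 xk2
    rcases cycB with ⟨c1, c2, c3⟩ | ⟨c1, c2, c3⟩ <;> rcases pA with od | od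
    · exact K2 hqs hc b a k (Ne.symm hab) hbk hak hmb hma yq1 yq2 yq3 b12 b13 b23 yH1 yH2 yH3
        ya1 ya2 ya3 yk1 yk2 yk3 c1 c2 c3 xq1 xq2 a12 xH1 xH2 xb1 xb2 xk1 xk2 od Rq Rb Ra
    · exact K2 hqs hc b a k (Ne.symm hab) hbk hak hmb hma yq1 yq2 yq3 b12 b13 b23 yH1 yH2 yH3
        ya1 ya2 ya3 yk1 yk2 yk3 c1 c2 c3 xq2 xq1 (Ne.symm a12) xH2 xH1 xb2 xb1 xk2 xk1 od Rq Rb Ra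
    · exact K2 hqs hc b a k (Ne.symm hab) hbk hak hmb hma yq1 yq3 yq2 b13 b12 (Ne.symm b23)
        yH1 yH3 yH2 ya1 ya3 ya2 yk1 yk3 yk2 c1 c2 c3 xq1 xq2 a12 xH1 xH2 xb1 xb2 xk1 xk2 od Rq Rb Ra
    · exact K2 hqs hc b a k (Ne.symm hab) hbk hak hmb hma yq1 yq3 yq2 b13 b12 (Ne.symm b23)
        yH1 yH3 yH2 ya1 ya3 ya2 yk1 yk3 yk2 c1 c2 c3 xq2 xq1 (Ne.symm a12) xH2 xH1 xb2 xb1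
        xk2 xk1 od Rq Rb Ra
  · -- (3,1,2)
    obtain ⟨x1, x2, x3, hx1, hx2, hx3, a12, a13, a23⟩ := ex3F h3a
    obtain ⟨P, hPB⟩ := (Finset.card_pos (s := B)).mp (by omega)
    obtain ⟨R1, R2, hR1, hR2, r12⟩ := ex2F h2k
    obtain ⟨xq1, xH1, xb1, xk1⟩ := getA x1 hx1
    obtain ⟨xq2, xH2, xb2, xk2⟩ := getA x2 hx2
    obtain ⟨xq3, xH3, xb3, xk3⟩ := getA x3 hx3
    obtain ⟨Pq, PH, Pa, Pk⟩ := getB P hPB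
    obtain ⟨R1q, _, R1a, R1b⟩ := getK R1 hR1
    obtain ⟨R2q, _, R2a, R2b⟩ := getK R2 hR2
    have cycA := cycle3 hqs hc a b k hab hak hbk xq1 xq2 xq3 a12 a13 a23 xb1 xb2 xb3 xk1 xk2 xk3
    have c1 := L_single hqs hc a b k hab hak hbk hma hmb R1q R1a R1b
    have c2 := L_single hqs hc a b k hab hak hbk hma hmb R2q R2a R2b
    rcases cycA with ⟨e1, e2, e3⟩ | ⟨e1, e2, e3⟩ <;>
      rcases c1 with h1 | h1 <;> rcases c2 with h2 | h2
    · exact absurd (eq_of_occ1 R1q R2q R2a (h1.trans h2.symm)) r12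
    · exact K3 hqs hc a b k hab hak hbk hma hmb xq1 xq2 xq3 a12 a13 a23 xH1 xH2 xH3
        xb1 xb2 xb3 xk1 xk2 xk3 e1 e2 e3 Pq PH Pa Pk R1q R2q r12 R1a R1b R2a R2b h1 h2
    · exact K3 hqs hc a b k hab hak hbk hma hmb xq1 xq2 xq3 a12 a13 a23 xH1 xH2 xH3
        xb1 xb2 xb3 xk1 xk2 xk3 e1 e2 e3 Pq PH Pa Pk R2q R1q (Ne.symm r12) R2a R2b R1a R1b h2 h1
    · exact absurd (eq_of_occ1 R1q R2q R2b (h1.trans h2.symm)) r12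
    · exact absurd (eq_of_occ1 R1q R2q R2a (h1.trans h2.symm)) r12
    · exact K3 hqs hc a b k hab hak hbk hma hmb xq1 xq3 xq2 a13 a12 (Ne.symm a23) xH1 xH3 xH2
        xb1 xb3 xb2 xk1 xk3 xk2 e1 e2 e3 Pq PH Pa Pk R1q R2q r12 R1a R1b R2a R2b h1 h2
    · exact K3 hqs hc a b k hab hak hbk hma hmb xq1 xq3 xq2 a13 a12 (Ne.symm a23) xH1 xH3 xH2
        xb1 xb3 xb2 xk1 xk3 xk2 e1 e2 e3 Pq PH Pa Pk R2q R1q (Ne.symm r12) R2a R2b R1a R1b h2 h1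
    · exact absurd (eq_of_occ1 R1q R2q R2b (h1.trans h2.symm)) r12
  · -- (1,3,2)
    obtain ⟨y1, y2, y3, hy1, hy2, hy3, b12, b13, b23⟩ := ex3F h3b
    obtain ⟨P, hPA⟩ := (Finset.card_pos (s := A)).mp (by omega)
    obtain ⟨R1, R2, hR1, hR2, r12⟩ := ex2F h2k
    obtain ⟨yq1, yH1, ya1, yk1⟩ := getB y1 hy1
    obtain ⟨yq2, yH2, ya2, yk2⟩ := getB y2 hy2
    obtain ⟨yq3, yH3, ya3, yk3⟩ := getB y3 hy3
    obtain ⟨Pq, PH, Pb, Pk⟩ := getA P hPA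
    obtain ⟨R1q, _, R1a, R1b⟩ := getK R1 hR1
    obtain ⟨R2q, _, R2a, R2b⟩ := getK R2 hR2
    have cycB := cycle3 hqs hc b a k (Ne.symm hab) hbk hak yq1 yq2 yq3 b12 b13 b23
      ya1 ya2 ya3 yk1 yk2 yk3
    have c1 := L_single hqs hc b a k (Ne.symm hab) hbk hak hmb hma R1q R1b R1a
    have c2 := L_single hqs hc b a k (Ne.symm hab) hbk hak hmb hma R2q R2b R2a
    rcases cycB with ⟨e1, e2, e3⟩ | ⟨e1, e2, e3⟩ <;>
      rcases c1 with h1 | h1 <;> rcases c2 with h2 | h2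
    · exact absurd (eq_of_occ1 R1q R2q R2b (h1.trans h2.symm)) r12
    · exact K3 hqs hc b a k (Ne.symm hab) hbk hak hmb hma yq1 yq2 yq3 b12 b13 b23 yH1 yH2 yH3
        ya1 ya2 ya3 yk1 yk2 yk3 e1 e2 e3 Pq PH Pb Pk R1q R2q r12 R1b R1a R2b R2a h1 h2
    · exact K3 hqs hc b a k (Ne.symm hab) hbk hak hmb hma yq1 yq2 yq3 b12 b13 b23 yH1 yH2 yH3
        ya1 ya2 ya3 yk1 yk2 yk3 e1 e2 e3 Pq PH Pb Pk R2q R1q (Ne.symm r12) R2b R2a R1b R1a h2 h1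
    · exact absurd (eq_of_occ1 R1q R2q R2a (h1.trans h2.symm)) r12
    · exact absurd (eq_of_occ1 R1q R2q R2b (h1.trans h2.symm)) r12
    · exact K3 hqs hc b a k (Ne.symm hab) hbk hak hmb hma yq1 yq3 yq2 b13 b12 (Ne.symm b23)
        yH1 yH3 yH2 ya1 ya3 ya2 yk1 yk3 yk2 e1 e2 e3 Pq PH Pb Pk R1q R2q r12 R1b R1a R2b R2a h1 h2
    · exact K3 hqs hc b a k (Ne.symm hab) hbk hak hmb hma yq1 yq3 yq2 b13 b12 (Ne.symm b23)
        yH1 yH3 yH2 ya1 ya3 ya2 yk1 yk3 yk2 e1 e2 e3 Pq PH Pb Pk R2q R1q (Ne.symm r12)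
        R2b R2a R1b R1a h2 h1
    · exact absurd (eq_of_occ1 R1q R2q R2a (h1.trans h2.symm)) r12
  · -- (2,2,2)
    obtain ⟨x1, x2, hx1, hx2, a12⟩ := ex2F h2a
    obtain ⟨y1, y2, hy1, hy2, b12⟩ := ex2F h2b
    obtain ⟨R1, R2, hR1, hR2, r12⟩ := ex2F h2k
    obtain ⟨xq1, xH1, xb1, xk1⟩ := getA x1 hx1
    obtain ⟨xq2, xH2, xb2, xk2⟩ := getA x2 hx2
    obtain ⟨yq1, yH1, ya1, yk1⟩ := getB y1 hy1
    obtain ⟨yq2, yH2, ya2, yk2⟩ := getB y2 hy2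
    obtain ⟨R1q, _, R1a, R1b⟩ := getK R1 hR1
    obtain ⟨R2q, _, R2a, R2b⟩ := getK R2 hR2
    have c1 := L_single hqs hc a b k hab hak hbk hma hmb R1q R1a R1b
    have c2 := L_single hqs hc a b k hab hak hbk hma hmb R2q R2a R2b
    have KK : ∀ Z1 Z2 W1 W2 : Code c, Z1 ∈ qs → Z2 ∈ qs → W1 ∈ qs → W2 ∈ qs →
        2 ≤ occ qs a (Z1 a) → 2 ≤ occ qs a (Z2 a) →
        occ qs b (Z1 b) = 1 → occ qs k (Z1 k) = 1 →
        2 ≤ occ qs b (W1 b) → 2 ≤ occ qs b (W2 b) →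
        occ qs a (W1 a) = 1 → occ qs a (W2 a) = 1 → occ qs k (W1 k) = 1 →
        Z1 b = Z2 k → W1 a = W2 k → False := by
      intro Z1 Z2 W1 W2 hZ1 hZ2 hW1 hW2 zH1 zH2 zb1 zk1 wH1 wH2 wa1 wa2 wk1 edge od
      rcases c1 with h1 | h1 <;> rcases c2 with h2 | h2
      · exact absurd (eq_of_occ1 R1q R2q R2a (h1.trans h2.symm)) r12
      · exact K4 hqs hc a b k hab hak hbk hma hmb hZ1 hZ2 zH1 zH2 zb1 zk1 edge
          hW1 hW2 wH1 wH2 wa1 wa2 wk1 od R1q R2q r12 R1a R1b R2a R2b h1 h2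
      · exact K4 hqs hc a b k hab hak hbk hma hmb hZ1 hZ2 zH1 zH2 zb1 zk1 edge
          hW1 hW2 wH1 wH2 wa1 wa2 wk1 od R2q R1q (Ne.symm r12) R2a R2b R1a R1b h2 h1
      · exact absurd (eq_of_occ1 R1q R2q R2b (h1.trans h2.symm)) r12
    have eA := L_pair hqs hc a b k hab hak hbk xq1 xq2 a12 xb1 xk1 xb2 xk2
    have eB := L_pair hqs hc b a k (Ne.symm hab) hbk hak yq1 yq2 b12 ya1 yk1 ya2 yk2
    rcases eA with e | e <;> rcases eB with f | f
    · exact KK x1 x2 y1 y2 xq1 xq2 yq1 yq2 xH1 xH2 xb1 xk1 yH1 yH2 ya1 ya2 yk1 e f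
    · exact KK x1 x2 y2 y1 xq1 xq2 yq2 yq1 xH1 xH2 xb1 xk1 yH2 yH1 ya2 ya1 yk2 e f
    · exact KK x2 x1 y1 y2 xq2 xq1 yq1 yq2 xH2 xH1 xb2 xk2 yH1 yH2 ya1 ya2 yk1 e f
    · exact KK x2 x1 y2 y1 xq2 xq1 yq2 yq1 xH2 xH1 xb2 xk2 yH2 yH1 ya2 ya1 yk2 e f

end Core

section Main

lemma countP_split {α : Type*} (l : List α) (big p q r : α → Prop)
    [DecidablePred big] [DecidablePred p] [DecidablePred q] [DecidablePred r]
    (hiff : ∀ x, big x ↔ (p x ∨ q x ∨ r x))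
    (hpq : ∀ x, ¬(p x ∧ q x)) (hpr : ∀ x, ¬(p x ∧ r x)) (hqr : ∀ x, ¬(q x ∧ r x)) :
    l.countP (fun x => decide (big x)) =
      l.countP (fun x => decide (p x)) + l.countP (fun x => decide (q x)) +
        l.countP (fun x => decide (r x)) := by
  induction l with
  | nil => simp
  | cons hd tl ih =>
    rw [List.countP_cons, List.countP_cons, List.countP_cons, List.countP_cons, ih]
    by_cases hp : p hd <;> by_cases hq : q hd <;> by_cases hr : r hd
    · exact absurd ⟨hp, hq⟩ (hpq hd)
    · exact absurd ⟨hp, hq⟩ (hpq hd)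
    · exact absurd ⟨hp, hr⟩ (hpr hd)
    · have hb : big hd := (hiff hd).mpr (Or.inl hp)
      simp [hp, hq, hr, hb]
      omega
    · exact absurd ⟨hq, hr⟩ (hqr hd)
    · have hb : big hd := (hiff hd).mpr (Or.inr (Or.inl hq))
      simp [hp, hq, hr, hb]
      omega
    · have hb : big hd := (hiff hd).mpr (Or.inr (Or.inr hr))
      simp [hp, hq, hr, hb]
      omega
    · have hb : ¬ big hd := by
        intro h
        rcases (hiff hd).mp h with h' | h' | h'
        · exact hp h'
        · exact hq h'
        · exact hr h'
      simp [hp, hq, hr, hb]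

lemma Pp_iff (qs : List (Code c)) (Q : Code c) :
    ((2 ≤ occ qs 0 (Q 0) ∧ occ qs 1 (Q 1) = 1 ∧ occ qs 2 (Q 2) = 1) ∨
     (occ qs 0 (Q 0) = 1 ∧ 2 ≤ occ qs 1 (Q 1) ∧ occ qs 2 (Q 2) = 1) ∨
     (occ qs 0 (Q 0) = 1 ∧ occ qs 1 (Q 1) = 1 ∧ 2 ≤ occ qs 2 (Q 2)))
    ↔ (Pp qs 0 Q ∨ Pp qs 1 Q ∨ Pp qs 2 Q) := by
  have fin3 : ∀ i : Fin 3, i = 0 ∨ i = 1 ∨ i = 2 := by decide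
  constructor
  · rintro (⟨h1, h2, h3⟩ | ⟨h1, h2, h3⟩ | ⟨h1, h2, h3⟩)
    · refine Or.inl ⟨h1, fun i hi => ?_⟩
      rcases fin3 i with rfl | rfl | rfl
      · exact absurd rfl hi
      · exact h2
      · exact h3
    · refine Or.inr (Or.inl ⟨h2, fun i hi => ?_⟩)
      rcases fin3 i with rfl | rfl | rfl
      · exact h1
      · exact absurd rfl hi
      · exact h3
    · refine Or.inr (Or.inr ⟨h3, fun i hi => ?_⟩)
      rcases fin3 i with rfl | rfl | rfl
      · exact h1
      · exact h2
      · exact absurd rfl hi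
  · rintro (⟨h1, h2⟩ | ⟨h1, h2⟩ | ⟨h1, h2⟩)
    · exact Or.inl ⟨h1, h2 1 (by decide), h2 2 (by decide)⟩
    · exact Or.inr (Or.inl ⟨h2 0 (by decide), h1, h2 2 (by decide)⟩)
    · exact Or.inr (Or.inr ⟨h2 0 (by decide), h2 1 (by decide), h1⟩)

lemma Pp_excl (qs : List (Code c)) (h h' : Fin 3) (hne : h ≠ h') (Q : Code c) :
    ¬(Pp qs h Q ∧ Pp qs h' Q) := by
  rintro ⟨⟨h1, _⟩, ⟨_, h2⟩⟩
  have := h2 h hne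
  omega

end Main

end AB19

theorem statement19 (c : ℕ) (hc : 5 ≤ c) (qs : List (Fin 3 → Fin c))
    (hqs : Feasible qs)
    (hno : ∀ Q ∈ qs, ¬ ∀ i : Fin 3, occ qs i (Q i) = 1)
    (hmiss : ∃ i j : Fin 3, i ≠ j ∧ (∃ q : Fin c, ∀ Q ∈ qs, Q i ≠ q) ∧
      (∃ q : Fin c, ∀ Q ∈ qs, Q j ≠ q)) :
    qs.countP (fun Q => decide
      ((2 ≤ occ qs 0 (Q 0) ∧ occ qs 1 (Q 1) = 1 ∧ occ qs 2 (Q 2) = 1) ∨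
       (occ qs 0 (Q 0) = 1 ∧ 2 ≤ occ qs 1 (Q 1) ∧ occ qs 2 (Q 2) = 1) ∨
       (occ qs 0 (Q 0) = 1 ∧ occ qs 1 (Q 1) = 1 ∧ 2 ≤ occ qs 2 (Q 2)))) ≤ 5 := by
  obtain ⟨i, j, hij, ⟨mi, hmi⟩, ⟨mj, hmj⟩⟩ := hmiss
  have hs := AB19.countP_split qs
    (fun Q => ((2 ≤ occ qs 0 (Q 0) ∧ occ qs 1 (Q 1) = 1 ∧ occ qs 2 (Q 2) = 1) ∨
       (occ qs 0 (Q 0) = 1 ∧ 2 ≤ occ qs 1 (Q 1) ∧ occ qs 2 (Q 2) = 1) ∨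
       (occ qs 0 (Q 0) = 1 ∧ occ qs 1 (Q 1) = 1 ∧ 2 ≤ occ qs 2 (Q 2))))
    (AB19.Pp qs 0) (AB19.Pp qs 1) (AB19.Pp qs 2)
    (fun Q => AB19.Pp_iff qs Q)
    (AB19.Pp_excl qs 0 1 (by decide)) (AB19.Pp_excl qs 0 2 (by decide))
    (AB19.Pp_excl qs 1 2 (by decide))
  rw [hs]
  have fin3 : ∀ i : Fin 3, i = 0 ∨ i = 1 ∨ i = 2 := by decide
  rcases fin3 i with rfl | rfl | rfl <;> rcases fin3 j with rfl | rfl | rfl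
  · exact absurd rfl hij
  · have h := AB19.core hqs hc 0 1 2 (by decide) (by decide) (by decide) hmi hmj
    linarith
  · have h := AB19.core hqs hc 0 2 1 (by decide) (by decide) (by decide) hmi hmj
    linarith
  · have h := AB19.core hqs hc 1 0 2 (by decide) (by decide) (by decide) hmi hmj
    linarith
  · exact absurd rfl hij
  · have h := AB19.core hqs hc 1 2 0 (by decide) (by decide) (by decide) hmi hmj
    linarith
  · have h := AB19.core hqs hc 2 0 1 (by decide) (by decide) (by decide) hmi hmj
    linarith
  · have h := AB19.core hqs hc 2 1 0 (by decide) (by decide) (by decide) hmi hmj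
    linarith
  · exact absurd rfl hij
end
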